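/- arXiv:1312.4649 — 4 statements merged into one kernel-verified Lean document; each statement's English description precedes it below -/
import Mathlib

section
/- For any two p×n quaternion matrices A and B, the Hadamard product satisfies ‖A ⋆ B‖₂ ≤ ‖A‖₂ · ‖B‖₂. -/
open scoped Quaternion Matrix
open MeasureTheory Filter Topology

noncomputable section

/-- The standard representation of a real quaternion `q = a + b·i + c·j + d·k` as the
`2 × 2` complex matrix `[[a+bi, c+di], [−c+di, a−bi]]`. -/
def quatToC2 (q : ℍ[ℝ]) : Matrix (Fin 2) (Fin 2) ℂ :=
  !![(q.re : ℂ) + q.imI * Complex.I, (q.imJ : ℂ) + q.imK * Complex.I;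
     (-q.imJ : ℂ) + q.imK * Complex.I, (q.re : ℂ) - q.imI * Complex.I]

/-- Entrywise complex representation `ψ` of a quaternion matrix: a `p × n` quaternion
matrix becomes a `2p × 2n` complex matrix. -/
def psi {p n : ℕ} (A : Matrix (Fin p) (Fin n) ℍ[ℝ]) :
    Matrix (Fin p × Fin 2) (Fin n × Fin 2) ℂ :=
  fun i j => quatToC2 (A i.1 j.1) i.2 j.2

/-- The 2-norm of a quaternion matrix: the L2 operator norm (i.e. the largest singular
value) of its complex representation `ψ(A)`. -/
def quatNorm2 {p n : ℕ} (A : Matrix (Fin p) (Fin n) ℍ[ℝ]) : ℝ :=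
  ‖LinearMap.toContinuousLinearMap (Matrix.toEuclideanLin (psi A))‖

/-- The increasingly ordered eigenvalues of a Hermitian complex matrix (junk value `0`
if the matrix is not Hermitian). -/
def sortedEigs {m : Type*} [Fintype m] [DecidableEq m] (M : Matrix m m ℂ) :
    Fin (Fintype.card m) → ℝ :=
  if h : M.IsHermitian then
    (h.eigenvalues ∘ (Fintype.equivFin m).symm) ∘
      Tuple.sort (h.eigenvalues ∘ (Fintype.equivFin m).symm)
  else 0

/-- `quatEig A k` is the `k`-th smallest eigenvalue (0-indexed) of a `p × p` quaternion
matrix `A` with `ψ(A)` Hermitian: the eigenvalues of `ψ(A)` come in coincident pairs, and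
we take one from each pair, i.e. every other entry of the increasingly sorted list of the
`2p` eigenvalues of `ψ(A)`. -/
def quatEig {p : ℕ} (A : Matrix (Fin p) (Fin p) ℍ[ℝ]) (k : Fin p) : ℝ :=
  sortedEigs (psi A) ⟨2 * k.val, by
    have h : Fintype.card (Fin p × Fin 2) = p * 2 := by simp
    have hk := k.isLt
    omega⟩

/-- `quatEigIdx A k` is `s_{k+1}(A)`, the `(k+1)`-st smallest eigenvalue of the quaternion
matrix `A` (0-indexed; junk value `0` if `k ≥ p`). -/
def quatEigIdx {p : ℕ} (A : Matrix (Fin p) (Fin p) ℍ[ℝ]) (k : ℕ) : ℝ :=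
  if h : k < p then quatEig A ⟨k, h⟩ else 0

/-! ### Auxiliary lemmas for Lemma 3.7 -/

lemma quatToC2_mul' (q r : ℍ[ℝ]) : quatToC2 (q * r) = quatToC2 q * quatToC2 r := by
  ext i j
  fin_cases i <;> fin_cases j <;>
    simp [quatToC2, Matrix.mul_apply, Fin.sum_univ_two, Quaternion.re_mul,
      Quaternion.imI_mul, Quaternion.imJ_mul, Quaternion.imK_mul, Complex.ext_iff] <;>
    ring_nf <;> exact ⟨trivial, trivial⟩

lemma quatToC2_col' (q : ℍ[ℝ]) (b : Fin 2) :
    ∑ a : Fin 2, ‖quatToC2 q a b‖ ^ 2 = ‖q‖ ^ 2 := by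
  have h : ‖q‖ ^ 2 = Quaternion.normSq q := by
    rw [sq, ← Quaternion.normSq_eq_norm_mul_self]
  rw [h, Quaternion.normSq_def']
  fin_cases b <;>
    simp [quatToC2, Fin.sum_univ_two, ← Complex.normSq_eq_norm_sq, Complex.normSq_apply] <;>
    ring_nf

lemma quatToC2_row' (q : ℍ[ℝ]) (a : Fin 2) :
    ∑ b : Fin 2, ‖quatToC2 q a b‖ ^ 2 = ‖q‖ ^ 2 := by
  have h : ‖q‖ ^ 2 = Quaternion.normSq q := by
    rw [sq, ← Quaternion.normSq_eq_norm_mul_self]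
  rw [h, Quaternion.normSq_def']
  fin_cases a <;>
    simp [quatToC2, Fin.sum_univ_two, ← Complex.normSq_eq_norm_sq, Complex.normSq_apply] <;>
    ring_nf

lemma quatToC2_mulVec_normSq' (q : ℍ[ℝ]) (v : Fin 2 → ℂ) :
    ∑ a : Fin 2, ‖(quatToC2 q *ᵥ v) a‖ ^ 2 = ‖q‖ ^ 2 * ∑ b : Fin 2, ‖v b‖ ^ 2 := by
  have h : ‖q‖ ^ 2 = Quaternion.normSq q := by
    rw [sq, ← Quaternion.normSq_eq_norm_mul_self]
  rw [h, Quaternion.normSq_def']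
  simp [quatToC2, Matrix.mulVec, dotProduct, Fin.sum_univ_two,
    ← Complex.normSq_eq_norm_sq, Complex.normSq_apply, Complex.add_re, Complex.add_im,
    Complex.mul_re, Complex.mul_im, Complex.sub_re, Complex.sub_im]
  ring

/-- The `Fin 2 → ℂ` vector regarded as an element of `EuclideanSpace`. -/
def iotaE2 (u : Fin 2 → ℂ) : EuclideanSpace ℂ (Fin 2) :=
  (WithLp.equiv 2 (Fin 2 → ℂ)).symm u

lemma iotaE2_norm (u : Fin 2 → ℂ) : ‖iotaE2 u‖ = Real.sqrt (∑ a, ‖u a‖ ^ 2) := by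
  rw [iotaE2, EuclideanSpace.norm_eq]; rfl

lemma iotaE2_sum {ι : Type*} (s : Finset ι) (f : ι → Fin 2 → ℂ) :
    iotaE2 (∑ l ∈ s, f l) = ∑ l ∈ s, iotaE2 (f l) := by
  simp only [iotaE2]
  exact map_sum (WithLp.linearEquiv 2 ℂ (Fin 2 → ℂ)).symm f s

open scoped Matrix.Norms.L2Operator in
/-- The squared `ℓ²`-norm of any column of a complex matrix is bounded by its squared
operator norm. -/
lemma col_sq_sum_le {m' n' : Type*} [Fintype m'] [Fintype n'] [DecidableEq n']
    (M : Matrix m' n' ℂ) (c : n') :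
    ∑ i, ‖M i c‖ ^ 2 ≤ ‖M‖ ^ 2 := by
  have h := Matrix.l2_opNorm_mulVec M (EuclideanSpace.single c 1)
  rw [EuclideanSpace.norm_single, norm_one, mul_one] at h
  have h2 : ‖(EuclideanSpace.equiv m' ℂ).symm
      (M *ᵥ (EuclideanSpace.single c 1 : EuclideanSpace ℂ n'))‖
      = Real.sqrt (∑ i, ‖M i c‖ ^ 2) := by
    rw [EuclideanSpace.norm_eq]
    congr 1
    refine Finset.sum_congr rfl fun i _ => ?_
    have : ((EuclideanSpace.equiv m' ℂ).symm
        (M *ᵥ (EuclideanSpace.single c 1 : EuclideanSpace ℂ n'))) i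
        = ∑ j, M i j * (if j = c then (1 : ℂ) else 0) := by
      simp [Matrix.mulVec, dotProduct, EuclideanSpace.equiv,
        EuclideanSpace.single_apply]
    rw [this]
    simp
  rw [h2] at h
  calc ∑ i, ‖M i c‖ ^ 2
      = (Real.sqrt (∑ i, ‖M i c‖ ^ 2)) ^ 2 := by
        rw [Real.sq_sqrt]; positivity
    _ ≤ ‖M‖ ^ 2 := by
        have := pow_le_pow_left₀ (Real.sqrt_nonneg _) h 2
        exact this

open scoped Matrix.Norms.L2Operator in
lemma quatNorm2_eq_l2 {p n : ℕ} (A : Matrix (Fin p) (Fin n) ℍ[ℝ]) :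
    quatNorm2 A = ‖psi A‖ := rfl

open scoped Matrix.Norms.L2Operator in
lemma rowsum_le {p n : ℕ} (A : Matrix (Fin p) (Fin n) ℍ[ℝ]) (j : Fin p) :
    ∑ l, ‖A j l‖ ^ 2 ≤ quatNorm2 A ^ 2 := by
  rw [quatNorm2_eq_l2, ← Matrix.l2_opNorm_conjTranspose (psi A)]
  have h := col_sq_sum_le (psi A)ᴴ (j, 0)
  refine le_trans (le_of_eq ?_) h
  rw [Fintype.sum_prod_type]
  refine Finset.sum_congr rfl fun l _ => ?_
  rw [← quatToC2_row' (A j l) 0]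
  refine Finset.sum_congr rfl fun b _ => ?_
  simp [Matrix.conjTranspose_apply, psi]

open scoped Matrix.Norms.L2Operator in
lemma colsum_le {p n : ℕ} (B : Matrix (Fin p) (Fin n) ℍ[ℝ]) (l : Fin n) :
    ∑ j, ‖B j l‖ ^ 2 ≤ quatNorm2 B ^ 2 := by
  rw [quatNorm2_eq_l2]
  have h := col_sq_sum_le (psi B) (l, 0)
  refine le_trans (le_of_eq ?_) h
  rw [Fintype.sum_prod_type]
  refine Finset.sum_congr rfl fun j _ => ?_
  rw [← quatToC2_col' (B j l) 0]
  rfl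

set_option maxHeartbeats 1000000 in
/-- **Lemma 3.7.** For any two `p × n` quaternion matrices `A` and `B`, the entrywise
(Hadamard) product satisfies `‖A ⋆ B‖₂ ≤ ‖A‖₂ · ‖B‖₂`. -/
theorem hadamard_norm_le {p n : ℕ} (A B : Matrix (Fin p) (Fin n) ℍ[ℝ]) :
    quatNorm2 (Matrix.of fun j l => A j l * B j l) ≤ quatNorm2 A * quatNorm2 B := by
  set C : Matrix (Fin p) (Fin n) ℍ[ℝ] := Matrix.of fun j l => A j l * B j l with hC
  have hA0 : (0:ℝ) ≤ quatNorm2 A := norm_nonneg _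
  have hB0 : (0:ℝ) ≤ quatNorm2 B := norm_nonneg _
  refine ContinuousLinearMap.opNorm_le_bound _ (mul_nonneg hA0 hB0) fun x => ?_
  -- unfold the application
  have happ : (LinearMap.toContinuousLinearMap (Matrix.toEuclideanLin (psi C))) x
      = (WithLp.equiv 2 ((Fin p × Fin 2) → ℂ)).symm
          (psi C *ᵥ (WithLp.equiv 2 ((Fin n × Fin 2) → ℂ)) x) := by
    rw [LinearMap.coe_toContinuousLinearMap', Matrix.toEuclideanLin_apply]; rfl
  rw [happ]
  set x' : (Fin n × Fin 2) → ℂ := (WithLp.equiv 2 ((Fin n × Fin 2) → ℂ)) x with hx'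
  -- the per-block vectors
  set w : Fin p → Fin n → (Fin 2 → ℂ) :=
    fun j l => quatToC2 (B j l) *ᵥ (fun b => x' (l, b)) with hw
  -- rows of the product
  have hrow : ∀ j : Fin p, (fun a => (psi C *ᵥ x') (j, a))
      = ∑ l, quatToC2 (A j l) *ᵥ w j l := by
    intro j
    funext a
    have : (psi C *ᵥ x') (j, a)
        = ∑ l, ∑ b, quatToC2 (C j l) a b * x' (l, b) := by
      simp only [Matrix.mulVec, dotProduct, psi, Fintype.sum_prod_type]
    rw [this]
    rw [Finset.sum_apply]
    refine Finset.sum_congr rfl fun l _ => ?_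
    have hCl : quatToC2 (C j l) = quatToC2 (A j l) * quatToC2 (B j l) := by
      rw [hC]; exact quatToC2_mul' _ _
    have hmv : quatToC2 (A j l) *ᵥ w j l
        = (quatToC2 (A j l) * quatToC2 (B j l)) *ᵥ (fun b => x' (l, b)) :=
      Matrix.mulVec_mulVec _ _ _
    rw [hCl, hmv]
    simp [Matrix.mulVec, dotProduct]
  -- squared norms of the per-block vectors
  have hwnorm : ∀ j l, ∑ a, ‖w j l a‖ ^ 2 = ‖B j l‖ ^ 2 * ∑ b, ‖x' (l, b)‖ ^ 2 := by
    intro j l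
    exact quatToC2_mulVec_normSq' (B j l) _
  -- norm of each row, by triangle inequality + Cauchy-Schwarz
  have hrowbound : ∀ j : Fin p, ∑ a, ‖(psi C *ᵥ x') (j, a)‖ ^ 2
      ≤ (∑ l, ‖A j l‖ ^ 2) * (∑ l, ‖B j l‖ ^ 2 * ∑ b, ‖x' (l, b)‖ ^ 2) := by
    intro j
    have h1 : ‖iotaE2 (fun a => (psi C *ᵥ x') (j, a))‖
        ≤ ∑ l, ‖A j l‖ * Real.sqrt (∑ a, ‖w j l a‖ ^ 2) := by
      rw [hrow j, iotaE2_sum]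
      refine le_trans (norm_sum_le _ _) ?_
      refine Finset.sum_le_sum fun l _ => ?_
      rw [iotaE2_norm, quatToC2_mulVec_normSq',
        Real.sqrt_mul (sq_nonneg _), Real.sqrt_sq (norm_nonneg _)]
    have h2 : (∑ l, ‖A j l‖ * Real.sqrt (∑ a, ‖w j l a‖ ^ 2)) ^ 2
        ≤ (∑ l, ‖A j l‖ ^ 2) * (∑ l, (Real.sqrt (∑ a, ‖w j l a‖ ^ 2)) ^ 2) :=
      Finset.sum_mul_sq_le_sq_mul_sq _ _ _
    have h3 : ∑ a, ‖(psi C *ᵥ x') (j, a)‖ ^ 2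
        = ‖iotaE2 (fun a => (psi C *ᵥ x') (j, a))‖ ^ 2 := by
      rw [iotaE2_norm, Real.sq_sqrt]; positivity
    rw [h3]
    calc ‖iotaE2 (fun a => (psi C *ᵥ x') (j, a))‖ ^ 2
        ≤ (∑ l, ‖A j l‖ * Real.sqrt (∑ a, ‖w j l a‖ ^ 2)) ^ 2 :=
          pow_le_pow_left₀ (norm_nonneg _) h1 2
      _ ≤ (∑ l, ‖A j l‖ ^ 2) * (∑ l, (Real.sqrt (∑ a, ‖w j l a‖ ^ 2)) ^ 2) := h2
      _ = (∑ l, ‖A j l‖ ^ 2) * (∑ l, ‖B j l‖ ^ 2 * ∑ b, ‖x' (l, b)‖ ^ 2) := by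
          congr 1
          refine Finset.sum_congr rfl fun l _ => ?_
          rw [Real.sq_sqrt (by positivity), hwnorm j l]
  -- total bound
  have htot : ∑ i : Fin p × Fin 2, ‖(psi C *ᵥ x') i‖ ^ 2
      ≤ (quatNorm2 A) ^ 2 * ((quatNorm2 B) ^ 2 * ∑ i : Fin n × Fin 2, ‖x' i‖ ^ 2) := by
    rw [Fintype.sum_prod_type]
    calc ∑ j, ∑ a, ‖(psi C *ᵥ x') (j, a)‖ ^ 2
        ≤ ∑ j, (∑ l, ‖A j l‖ ^ 2) * (∑ l, ‖B j l‖ ^ 2 * ∑ b, ‖x' (l, b)‖ ^ 2) :=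
          Finset.sum_le_sum fun j _ => hrowbound j
      _ ≤ ∑ j, (quatNorm2 A) ^ 2 * (∑ l, ‖B j l‖ ^ 2 * ∑ b, ‖x' (l, b)‖ ^ 2) := by
          refine Finset.sum_le_sum fun j _ => ?_
          refine mul_le_mul_of_nonneg_right (rowsum_le A j) ?_
          positivity
      _ = (quatNorm2 A) ^ 2 * ∑ l, (∑ j, ‖B j l‖ ^ 2) * ∑ b, ‖x' (l, b)‖ ^ 2 := by
          rw [← Finset.mul_sum, Finset.sum_comm]
          congr 1
          refine Finset.sum_congr rfl fun l _ => ?_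
          rw [← Finset.sum_mul]
      _ ≤ (quatNorm2 A) ^ 2 * ∑ l, (quatNorm2 B) ^ 2 * ∑ b, ‖x' (l, b)‖ ^ 2 := by
          refine mul_le_mul_of_nonneg_left (Finset.sum_le_sum fun l _ => ?_) (by positivity)
          refine mul_le_mul_of_nonneg_right (colsum_le B l) (by positivity)
      _ = (quatNorm2 A) ^ 2 * ((quatNorm2 B) ^ 2 * ∑ i : Fin n × Fin 2, ‖x' i‖ ^ 2) := by
          rw [← Finset.mul_sum, Fintype.sum_prod_type]
  -- conclude
  have hnorm : ‖(WithLp.equiv 2 ((Fin p × Fin 2) → ℂ)).symm (psi C *ᵥ x')‖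
      = Real.sqrt (∑ i : Fin p × Fin 2, ‖(psi C *ᵥ x') i‖ ^ 2) := by
    rw [EuclideanSpace.norm_eq]; rfl
  have hxnorm : ‖x‖ ^ 2 = ∑ i : Fin n × Fin 2, ‖x' i‖ ^ 2 := by
    rw [EuclideanSpace.norm_eq, Real.sq_sqrt (by positivity)]
    rfl
  rw [hnorm]
  have : Real.sqrt (∑ i : Fin p × Fin 2, ‖(psi C *ᵥ x') i‖ ^ 2)
      ≤ Real.sqrt ((quatNorm2 A * quatNorm2 B * ‖x‖) ^ 2) := by
    refine Real.sqrt_le_sqrt ?_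
    calc ∑ i : Fin p × Fin 2, ‖(psi C *ᵥ x') i‖ ^ 2
        ≤ (quatNorm2 A) ^ 2 * ((quatNorm2 B) ^ 2 * ∑ i : Fin n × Fin 2, ‖x' i‖ ^ 2) := htot
      _ = (quatNorm2 A * quatNorm2 B * ‖x‖) ^ 2 := by rw [← hxnorm]; ring
  refine le_trans this (le_of_eq ?_)
  exact Real.sqrt_sq (by positivity)

end
end

section
/- Let h₁,…,h_n be independent real random variables with E h_v = 0, |h_v| ≤ b almost surely, and E h_v² ≤ M for all v, where b, M > 0. Then for every integer m ≥ 1, E( (n^{−1} Σ_{v=1}^n h_v)^{2m} ) ≤ Σ_{k=1}^m (3Mk/n)^k · (bk/n)^{2(m−k)}. -/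
open MeasureTheory Filter Finset

lemma pow_self_le_three_pow_mul_factorial (j : ℕ) :
    (j : ℝ) ^ j ≤ 3 ^ j * (j.factorial : ℝ) := by
  have hfac : (0:ℝ) < (j.factorial : ℝ) := by exact_mod_cast j.factorial_pos
  have h1 : (j:ℝ)^j / j.factorial ≤ Real.exp j := by
    have h := Real.sum_le_exp_of_nonneg (x := (j:ℝ)) (Nat.cast_nonneg j) (j+1)
    refine le_trans ?_ h
    exact Finset.single_le_sum (f := fun i => (j:ℝ)^i / i.factorial)
      (fun i _ => by positivity) (Finset.self_mem_range_succ j)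
  have h2 : Real.exp j ≤ 3 ^ j := by
    calc Real.exp (j:ℝ) = Real.exp 1 ^ j := by rw [Real.exp_one_pow]
      _ ≤ 3 ^ j := by
          refine pow_le_pow_left₀ (Real.exp_pos 1).le ?_ j
          have := Real.exp_one_lt_d9; linarith
  have := (div_le_iff₀ hfac).mp (h1.trans h2)
  linarith

lemma choose_mul_pow_self_le {n j : ℕ} :
    (n.choose j : ℝ) * (j:ℝ)^j ≤ 3^j * (n:ℝ)^j := by
  have h1 : n.choose j * j.factorial ≤ n ^ j := by
    rw [mul_comm, ← Nat.descFactorial_eq_factorial_mul_choose]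
    exact Nat.descFactorial_le_pow n j
  have h1' : (n.choose j : ℝ) * (j.factorial:ℝ) ≤ (n:ℝ)^j := by exact_mod_cast h1
  calc (n.choose j:ℝ) * (j:ℝ)^j
      ≤ (n.choose j:ℝ) * (3^j * j.factorial) :=
        mul_le_mul_of_nonneg_left (pow_self_le_three_pow_mul_factorial j) (Nat.cast_nonneg _)
    _ = 3^j * ((n.choose j:ℝ) * j.factorial) := by ring
    _ ≤ 3^j * (n:ℝ)^j := mul_le_mul_of_nonneg_left h1' (by positivity)

lemma perj_bound {n m j : ℕ} (hj1 : 1 ≤ j) (hjm : j ≤ m) {M b : ℝ}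
    (hM : 0 ≤ M) (hb : 0 ≤ b) (hn : 1 ≤ n) :
    ((n:ℝ)⁻¹)^(2*m) * ((n.choose j : ℝ) * (M^j * b^(2*m - 2*j) * (j:ℝ)^(2*m))) ≤
      (3*M*j/n)^j * (b*j/n)^(2*(m-j)) := by
  have hn0 : (n:ℝ) ≠ 0 := Nat.cast_ne_zero.2 (by omega)
  have he : 2*m - 2*j = 2*(m-j) := by omega
  have h2m : 2*m = j + (j + 2*(m-j)) := by omega
  rw [he]
  calc ((n:ℝ)⁻¹)^(2*m) * ((n.choose j : ℝ) * (M^j * b^(2*(m-j)) * (j:ℝ)^(2*m)))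
      = ((n.choose j:ℝ) * (j:ℝ)^j) *
          (((j:ℝ)^(j + 2*(m-j)) * (M^j * b^(2*(m-j)))) * ((n:ℝ)⁻¹)^(2*m)) := by
        rw [h2m]; ring
    _ ≤ (3^j * (n:ℝ)^j) *
          (((j:ℝ)^(j + 2*(m-j)) * (M^j * b^(2*(m-j)))) * ((n:ℝ)⁻¹)^(2*m)) := by
        refine mul_le_mul_of_nonneg_right choose_mul_pow_self_le ?_
        positivity
    _ = (3*M*j/n)^j * (b*j/n)^(2*(m-j)) := by
        rw [h2m]
        have hx : (n:ℝ)^j * ((n:ℝ)⁻¹)^j = 1 := by rw [← mul_pow, mul_inv_cancel₀ hn0, one_pow]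
        linear_combination (3^j * (j:ℝ)^j * (j:ℝ)^(2*(m-j)) * M^j * b^(2*(m-j)) * ((n:ℝ)⁻¹)^j * ((n:ℝ)⁻¹)^(2*(m-j))) * hx

section aux
variable {Ω : Type*} [MeasurableSpace Ω] {μ : Measure Ω} [IsProbabilityMeasure μ]

lemma integrable_of_abs_bound {g : Ω → ℝ} (hg : Measurable g) {C : ℝ}
    (hC : ∀ᵐ ω ∂μ, |g ω| ≤ C) : Integrable g μ :=
  Integrable.mono' (integrable_const C) hg.aestronglyMeasurable
    (by simpa [Real.norm_eq_abs] using hC)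

lemma integrable_finset_prod_of_abs_bound {ι : Type*} [Fintype ι]
    {g : ι → Ω → ℝ} (hmeas : ∀ v, Measurable (g v)) (c : ι → ℝ)
    (hc : ∀ v, ∀ᵐ ω ∂μ, |g v ω| ≤ c v) (s : Finset ι) :
    Integrable (fun ω => ∏ v ∈ s, g v ω) μ := by
  refine integrable_of_abs_bound (by measurability) (C := ∏ v ∈ s, |c v|) ?_
  filter_upwards [ae_all_iff.2 hc] with ω hω
  rw [Finset.abs_prod]
  exact Finset.prod_le_prod (fun i _ => abs_nonneg _)
    (fun i _ => (hω i).trans (le_abs_self _))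

lemma integral_finset_prod_of_indep {ι : Type*} [Fintype ι]
    {g : ι → Ω → ℝ}
    (hind : ProbabilityTheory.iIndepFun g μ)
    (hmeas : ∀ v, Measurable (g v)) (c : ι → ℝ)
    (hc : ∀ v, ∀ᵐ ω ∂μ, |g v ω| ≤ c v) (s : Finset ι) :
    ∫ ω, ∏ v ∈ s, g v ω ∂μ = ∏ v ∈ s, ∫ ω, g v ω ∂μ := by
  classical
  induction s using Finset.cons_induction with
  | empty => simp
  | cons a s ha ih =>
    rw [Finset.prod_cons]
    have hprod_int : Integrable (fun ω => ∏ v ∈ s, g v ω) μ :=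
      integrable_finset_prod_of_abs_bound hmeas c hc s
    have hint_a : Integrable (g a) μ := integrable_of_abs_bound (hmeas a) (hc a)
    have hindep2 : ProbabilityTheory.IndepFun (g a) (fun ω => ∏ v ∈ s, g v ω) μ := by
      have := (hind.indepFun_finsetProd_of_notMem hmeas ha).symm
      convert this using 1
      ext ω
      simp [Finset.prod_apply]
    have := hindep2.integral_mul_eq_mul_integral hint_a.aestronglyMeasurable hprod_int.aestronglyMeasurable
    simp_rw [Finset.prod_cons, ← ih]
    calc ∫ ω, g a ω * ∏ v ∈ s, g v ω ∂μ
        = (∫ ω, g a ω ∂μ) * ∫ ω, ∏ v ∈ s, g v ω ∂μ := this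

lemma multinomial_univ_eq {n : ℕ} {k : Fin n → ℕ} {s : Finset (Fin n)}
    (h : ∀ v ∉ s, k v = 0) :
    Nat.multinomial Finset.univ k = Nat.multinomial s k := by
  unfold Nat.multinomial
  rw [← Finset.sum_subset (Finset.subset_univ s) (fun x _ hx => h x hx),
    ← Finset.prod_subset (Finset.subset_univ s) (fun x _ hx => by rw [h x hx]; rfl)]

end aux

/-- **(4.7)-type moment bound.** Let `h₁,…,h_n` be independent real random variables with
`E h_v = 0`, `|h_v| ≤ b` a.s. and `E h_v² ≤ M`.  Then for every integer `m ≥ 1`,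
`E((n⁻¹ Σ_v h_v)^{2m}) ≤ Σ_{k=1}^m (3Mk/n)^k (bk/n)^{2(m−k)}`. -/
theorem moment_bound_sum_bounded
    {Ω : Type*} [MeasurableSpace Ω] (μ : Measure Ω) [IsProbabilityMeasure μ]
    {n : ℕ} (hn : 1 ≤ n) (h : Fin n → Ω → ℝ) (b M : ℝ) (hb : 0 < b) (hM : 0 < M)
    (hmeas : ∀ v, Measurable (h v))
    (hindep : ProbabilityTheory.iIndepFun h μ)
    (hmean : ∀ v, ∫ ω, h v ω ∂μ = 0)
    (hbound : ∀ v, ∀ᵐ ω ∂μ, |h v ω| ≤ b)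
    (hvar : ∀ v, ∫ ω, h v ω ^ 2 ∂μ ≤ M)
    (m : ℕ) (hm : 1 ≤ m) :
    ∫ ω, ((n : ℝ)⁻¹ * ∑ v, h v ω) ^ (2 * m) ∂μ ≤
      ∑ k ∈ Finset.Icc 1 m,
        (3 * M * (k : ℝ) / n) ^ k * (b * (k : ℝ) / n) ^ (2 * (m - k)) := by
  classical
  have hb0 : (0:ℝ) ≤ b := hb.le
  have hM0 : (0:ℝ) ≤ M := hM.le
  -- a.e. bounds on powers
  have hpow_bound : ∀ (k : Fin n → ℕ) v, ∀ᵐ ω ∂μ, |h v ω ^ k v| ≤ b ^ k v := by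
    intro k v
    filter_upwards [hbound v] with ω hω
    rw [abs_pow]; exact pow_le_pow_left₀ (abs_nonneg _) hω _
  have hint_pow : ∀ v (k : ℕ), Integrable (fun ω => h v ω ^ k) μ := by
    intro v k
    refine integrable_of_abs_bound ((hmeas v).pow_const k) (C := b ^ k) ?_
    filter_upwards [hbound v] with ω hω
    rw [abs_pow]; exact pow_le_pow_left₀ (abs_nonneg _) hω _
  -- factorization of product integrals
  have hfact : ∀ k : Fin n → ℕ,
      ∫ ω, ∏ v, h v ω ^ k v ∂μ = ∏ v, ∫ ω, h v ω ^ k v ∂μ := by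
    intro k
    refine integral_finset_prod_of_indep ?_ (fun v => (hmeas v).pow_const (k v))
      (fun v => b ^ k v) (hpow_bound k) Finset.univ
    exact hindep.comp (fun v x => x ^ k v) (fun v => measurable_id.pow_const (k v))
  -- bound on a single power integral
  have habs : ∀ v (k : ℕ), 2 ≤ k → |∫ ω, h v ω ^ k ∂μ| ≤ M * b ^ (k - 2) := by
    intro v k hk
    have step1 : |∫ ω, h v ω ^ k ∂μ| ≤ ∫ ω, |h v ω ^ k| ∂μ := by
      simpa [Real.norm_eq_abs] using
        norm_integral_le_integral_norm (μ := μ) (fun ω => h v ω ^ k)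
    have step2 : ∫ ω, |h v ω ^ k| ∂μ ≤ ∫ ω, h v ω ^ 2 * b ^ (k-2) ∂μ := by
      refine integral_mono_ae (hint_pow v k).abs ((hint_pow v 2).mul_const _) ?_
      filter_upwards [hbound v] with ω hω
      have hsplit : |h v ω ^ k| = h v ω ^ 2 * |h v ω| ^ (k-2) := by
        rw [abs_pow, ← sq_abs, ← pow_add]
        congr 1; omega
      rw [hsplit]
      exact mul_le_mul_of_nonneg_left (pow_le_pow_left₀ (abs_nonneg _) hω _) (by positivity)
    have step3 : ∫ ω, h v ω ^ 2 * b ^ (k-2) ∂μ = (∫ ω, h v ω ^ 2 ∂μ) * b ^ (k-2) :=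
      integral_mul_const _ _
    have step4 : (∫ ω, h v ω ^ 2 ∂μ) * b ^ (k-2) ≤ M * b ^ (k-2) :=
      mul_le_mul_of_nonneg_right (hvar v) (by positivity)
    calc |∫ ω, h v ω ^ k ∂μ| ≤ ∫ ω, |h v ω ^ k| ∂μ := step1
      _ ≤ ∫ ω, h v ω ^ 2 * b ^ (k-2) ∂μ := step2
      _ = (∫ ω, h v ω ^ 2 ∂μ) * b ^ (k-2) := step3
      _ ≤ M * b ^ (k-2) := step4
  -- expansion of the integral
  have expand : ∫ ω, (∑ v, h v ω) ^ (2*m) ∂μ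
      = ∑ k ∈ Finset.piAntidiag (Finset.univ : Finset (Fin n)) (2*m),
          (Nat.multinomial Finset.univ k : ℝ) * ∏ v, ∫ ω, h v ω ^ k v ∂μ := by
    have hpt : ∀ ω, (∑ v, h v ω) ^ (2*m)
        = ∑ k ∈ Finset.piAntidiag (Finset.univ : Finset (Fin n)) (2*m),
            (Nat.multinomial Finset.univ k : ℝ) * ∏ v, h v ω ^ k v := fun ω =>
      Finset.sum_pow_eq_sum_piAntidiag (Finset.univ) (fun v => h v ω) (2*m)
    simp_rw [hpt]
    rw [integral_finset_sum]
    · exact Finset.sum_congr rfl fun k _ => by rw [integral_const_mul, hfact k]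
    · intro k _
      exact (integrable_finset_prod_of_abs_bound (fun v => (hmeas v).pow_const (k v))
        (fun v => b ^ k v) (hpow_bound k) Finset.univ).const_mul _
  -- termwise bound
  have hsum_bound : ∑ k ∈ Finset.piAntidiag (Finset.univ : Finset (Fin n)) (2*m),
        (Nat.multinomial Finset.univ k : ℝ) * ∏ v, ∫ ω, h v ω ^ k v ∂μ
      ≤ ∑ k ∈ Finset.piAntidiag (Finset.univ : Finset (Fin n)) (2*m),
        (if ∀ v, k v ≠ 1 then
          (Nat.multinomial Finset.univ k : ℝ) *
            (M ^ (Finset.univ.filter fun v => k v ≠ 0).card *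
             b ^ (2*m - 2 * (Finset.univ.filter fun v => k v ≠ 0).card)) else 0) := by
    refine Finset.sum_le_sum fun k hk => ?_
    by_cases hgood : ∀ v, k v ≠ 1
    · rw [if_pos hgood]
      set s := Finset.univ.filter fun v => k v ≠ 0 with hs
      have hks : ∀ v ∈ s, 2 ≤ k v := by
        intro v hv
        have h0 : k v ≠ 0 := (Finset.mem_filter.1 hv).2
        have h1 := hgood v
        omega
      have hsumk : ∑ v ∈ s, k v = 2*m := by
        rw [hs, Finset.sum_filter_ne_zero]
        exact (Finset.mem_piAntidiag.1 hk).1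
      have hprod_eq : ∏ v, ∫ ω, h v ω ^ k v ∂μ = ∏ v ∈ s, ∫ ω, h v ω ^ k v ∂μ := by
        refine (Finset.prod_subset (Finset.subset_univ s) fun v _ hv => ?_).symm
        have h0 : k v = 0 := by
          by_contra h0
          exact hv (Finset.mem_filter.2 ⟨Finset.mem_univ v, h0⟩)
        simp [h0]
      have h4 : ∑ v ∈ s, (k v - 2) = 2*m - 2 * s.card := by
        have h4' : ∑ v ∈ s, (k v - 2 + 2) = ∑ v ∈ s, k v :=
          Finset.sum_congr rfl fun v hv => by have := hks v hv; omega
        rw [Finset.sum_add_distrib, Finset.sum_const, smul_eq_mul] at h4'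
        omega
      have habs2 : ∏ v ∈ s, ∫ ω, h v ω ^ k v ∂μ ≤ M ^ s.card * b ^ (2*m - 2 * s.card) := by
        calc ∏ v ∈ s, ∫ ω, h v ω ^ k v ∂μ
            ≤ |∏ v ∈ s, ∫ ω, h v ω ^ k v ∂μ| := le_abs_self _
          _ = ∏ v ∈ s, |∫ ω, h v ω ^ k v ∂μ| := Finset.abs_prod _ _
          _ ≤ ∏ v ∈ s, (M * b ^ (k v - 2)) :=
              Finset.prod_le_prod (fun v _ => abs_nonneg _)
                (fun v hv => habs v (k v) (hks v hv))
          _ = M ^ s.card * b ^ (∑ v ∈ s, (k v - 2)) := by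
              rw [Finset.prod_mul_distrib, Finset.prod_const, Finset.prod_pow_eq_pow_sum]
          _ = M ^ s.card * b ^ (2*m - 2 * s.card) := by rw [h4]
      rw [hprod_eq]
      exact mul_le_mul_of_nonneg_left habs2 (Nat.cast_nonneg _)
    · rw [if_neg hgood]
      push_neg at hgood
      obtain ⟨v, hv⟩ := hgood
      have hzero : ∏ v', ∫ ω, h v' ω ^ k v' ∂μ = 0 :=
        Finset.prod_eq_zero (Finset.mem_univ v) (by simp [hv, hmean v])
      simp [hzero]
  -- fiberwise grouping by support
  have hfiber : ∑ k ∈ Finset.piAntidiag (Finset.univ : Finset (Fin n)) (2*m),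
        (if ∀ v, k v ≠ 1 then
          (Nat.multinomial Finset.univ k : ℝ) *
            (M ^ (Finset.univ.filter fun v => k v ≠ 0).card *
             b ^ (2*m - 2 * (Finset.univ.filter fun v => k v ≠ 0).card)) else 0)
      ≤ ∑ s ∈ (Finset.univ : Finset (Fin n)).powerset,
          (if 1 ≤ s.card ∧ s.card ≤ m then
            M ^ s.card * b ^ (2*m - 2*s.card) * (s.card:ℝ)^(2*m) else 0) := by
    rw [← Finset.sum_fiberwise_of_maps_to
      (g := fun k : Fin n → ℕ => Finset.univ.filter fun v => k v ≠ 0)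
      (t := (Finset.univ : Finset (Fin n)).powerset)
      (fun k _ => Finset.mem_powerset.2 (Finset.subset_univ _))]
    refine Finset.sum_le_sum fun s hs => ?_
    by_cases hcard : 1 ≤ s.card ∧ s.card ≤ m
    · rw [if_pos hcard]
      have hGle : ∀ k ∈ (Finset.piAntidiag (Finset.univ : Finset (Fin n)) (2*m)).filter
            (fun k => Finset.univ.filter (fun v => k v ≠ 0) = s),
          (if ∀ v, k v ≠ 1 then
            (Nat.multinomial Finset.univ k : ℝ) *
              (M ^ (Finset.univ.filter fun v => k v ≠ 0).card *
               b ^ (2*m - 2 * (Finset.univ.filter fun v => k v ≠ 0).card)) else 0)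
          ≤ (Nat.multinomial Finset.univ k : ℝ) * (M ^ s.card * b ^ (2*m - 2*s.card)) := by
        intro k hk
        have hks := (Finset.mem_filter.1 hk).2
        split_ifs with hgood
        · rw [hks]
        · positivity
      have hmultsum : ∑ k ∈ (Finset.piAntidiag (Finset.univ : Finset (Fin n)) (2*m)).filter
            (fun k => Finset.univ.filter (fun v => k v ≠ 0) = s),
            (Nat.multinomial Finset.univ k : ℝ) ≤ (s.card:ℝ)^(2*m) := by
        have hsub : (Finset.piAntidiag (Finset.univ : Finset (Fin n)) (2*m)).filter
            (fun k => Finset.univ.filter (fun v => k v ≠ 0) = s) ⊆ Finset.piAntidiag s (2*m) := by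
          intro k hk
          rw [Finset.mem_filter] at hk
          obtain ⟨hkT, hks⟩ := hk
          have hmem := Finset.mem_piAntidiag.1 hkT
          rw [Finset.mem_piAntidiag]
          refine ⟨?_, fun i hi => ?_⟩
          · rw [← hks, Finset.sum_filter_ne_zero]; exact hmem.1
          · rw [← hks]; exact Finset.mem_filter.2 ⟨Finset.mem_univ i, hi⟩
        calc ∑ k ∈ (Finset.piAntidiag (Finset.univ : Finset (Fin n)) (2*m)).filter
              (fun k => Finset.univ.filter (fun v => k v ≠ 0) = s),
              (Nat.multinomial Finset.univ k : ℝ)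
            = ∑ k ∈ (Finset.piAntidiag (Finset.univ : Finset (Fin n)) (2*m)).filter
              (fun k => Finset.univ.filter (fun v => k v ≠ 0) = s),
              (Nat.multinomial s k : ℝ) := by
              refine Finset.sum_congr rfl fun k hk => ?_
              have hks := (Finset.mem_filter.1 hk).2
              rw [multinomial_univ_eq (fun v hv => ?_)]
              by_contra h0
              exact hv (hks ▸ Finset.mem_filter.2 ⟨Finset.mem_univ v, h0⟩)
          _ ≤ ∑ k ∈ Finset.piAntidiag s (2*m), (Nat.multinomial s k : ℝ) :=
              Finset.sum_le_sum_of_subset_of_nonneg hsub (fun _ _ _ => Nat.cast_nonneg _)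
          _ = (s.card:ℝ)^(2*m) := by
              have := Finset.sum_pow_eq_sum_piAntidiag s (fun _ => (1:ℝ)) (2*m)
              simpa using this.symm
      calc ∑ k ∈ (Finset.piAntidiag (Finset.univ : Finset (Fin n)) (2*m)).filter
            (fun k => Finset.univ.filter (fun v => k v ≠ 0) = s),
            (if ∀ v, k v ≠ 1 then
              (Nat.multinomial Finset.univ k : ℝ) *
                (M ^ (Finset.univ.filter fun v => k v ≠ 0).card *
                 b ^ (2*m - 2 * (Finset.univ.filter fun v => k v ≠ 0).card)) else 0)
          ≤ ∑ k ∈ (Finset.piAntidiag (Finset.univ : Finset (Fin n)) (2*m)).filter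
            (fun k => Finset.univ.filter (fun v => k v ≠ 0) = s),
            (Nat.multinomial Finset.univ k : ℝ) * (M ^ s.card * b ^ (2*m - 2*s.card)) :=
            Finset.sum_le_sum hGle
        _ = (M ^ s.card * b ^ (2*m - 2*s.card)) *
            ∑ k ∈ (Finset.piAntidiag (Finset.univ : Finset (Fin n)) (2*m)).filter
            (fun k => Finset.univ.filter (fun v => k v ≠ 0) = s),
            (Nat.multinomial Finset.univ k : ℝ) := by
            rw [Finset.mul_sum]
            exact Finset.sum_congr rfl fun k _ => mul_comm _ _
        _ ≤ (M ^ s.card * b ^ (2*m - 2*s.card)) * (s.card:ℝ)^(2*m) :=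
            mul_le_mul_of_nonneg_left hmultsum (by positivity)
    · rw [if_neg hcard]
      refine le_of_eq (Finset.sum_eq_zero fun k hk => ?_)
      rw [Finset.mem_filter] at hk
      obtain ⟨hkT, hks⟩ := hk
      split_ifs with hgood
      · exfalso
        apply hcard
        have hks2 : ∀ v ∈ s, 2 ≤ k v := by
          intro v hv
          rw [← hks] at hv
          have h0 : k v ≠ 0 := (Finset.mem_filter.1 hv).2
          have h1 := hgood v
          omega
        have hsumk : ∑ v ∈ s, k v = 2*m := by
          rw [← hks, Finset.sum_filter_ne_zero]
          exact (Finset.mem_piAntidiag.1 hkT).1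
        have hcard2 : 2 * s.card ≤ ∑ v ∈ s, k v := by
          have := Finset.card_nsmul_le_sum s k 2 hks2
          simpa [smul_eq_mul, mul_comm] using this
        constructor
        · rcases Finset.eq_empty_or_nonempty s with rfl | hne
          · simp at hsumk; omega
          · exact Finset.card_pos.2 hne
        · omega
      · rfl
  -- sum over powerset = sum over cardinalities
  have hpowersum : ∑ s ∈ (Finset.univ : Finset (Fin n)).powerset,
        (if 1 ≤ s.card ∧ s.card ≤ m then
          M ^ s.card * b ^ (2*m - 2*s.card) * (s.card:ℝ)^(2*m) else 0)
      = ∑ j ∈ Finset.range (n+1), (n.choose j : ℝ) *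
          (if 1 ≤ j ∧ j ≤ m then M ^ j * b ^ (2*m - 2*j) * (j:ℝ)^(2*m) else 0) := by
    rw [Finset.sum_powerset_apply_card
      (fun j => if 1 ≤ j ∧ j ≤ m then M ^ j * b ^ (2*m - 2*j) * (j:ℝ)^(2*m) else 0)]
    simp [Finset.card_univ, nsmul_eq_mul]
  -- restrict to the relevant range
  have hrestrict : ∑ j ∈ Finset.range (n+1), (n.choose j : ℝ) *
        (if 1 ≤ j ∧ j ≤ m then M ^ j * b ^ (2*m - 2*j) * (j:ℝ)^(2*m) else 0)
      = ∑ j ∈ (Finset.range (n+1)).filter (fun j => 1 ≤ j ∧ j ≤ m),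
        (n.choose j : ℝ) * (M ^ j * b ^ (2*m - 2*j) * (j:ℝ)^(2*m)) := by
    rw [Finset.sum_filter]
    refine Finset.sum_congr rfl fun j _ => ?_
    split_ifs <;> simp
  -- put everything together
  have hc : (0:ℝ) ≤ ((n:ℝ)⁻¹)^(2*m) := by positivity
  calc ∫ ω, ((n : ℝ)⁻¹ * ∑ v, h v ω) ^ (2 * m) ∂μ
      = ((n:ℝ)⁻¹)^(2*m) * ∫ ω, (∑ v, h v ω) ^ (2*m) ∂μ := by
        simp_rw [mul_pow]
        rw [integral_const_mul]
    _ ≤ ((n:ℝ)⁻¹)^(2*m) * ∑ j ∈ (Finset.range (n+1)).filter (fun j => 1 ≤ j ∧ j ≤ m),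
          (n.choose j : ℝ) * (M ^ j * b ^ (2*m - 2*j) * (j:ℝ)^(2*m)) := by
        refine mul_le_mul_of_nonneg_left ?_ hc
        rw [expand]
        exact hsum_bound.trans (hfiber.trans (le_of_eq (hpowersum.trans hrestrict)))
    _ = ∑ j ∈ (Finset.range (n+1)).filter (fun j => 1 ≤ j ∧ j ≤ m),
          ((n:ℝ)⁻¹)^(2*m) * ((n.choose j : ℝ) * (M ^ j * b ^ (2*m - 2*j) * (j:ℝ)^(2*m))) :=
        Finset.mul_sum _ _ _
    _ ≤ ∑ j ∈ (Finset.range (n+1)).filter (fun j => 1 ≤ j ∧ j ≤ m),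
          (3 * M * (j : ℝ) / n) ^ j * (b * (j : ℝ) / n) ^ (2 * (m - j)) := by
        refine Finset.sum_le_sum fun j hj => ?_
        obtain ⟨hj1, hjm⟩ := (Finset.mem_filter.1 hj).2
        exact perj_bound hj1 hjm hM0 hb0 hn
    _ ≤ ∑ k ∈ Finset.Icc 1 m,
          (3 * M * (k : ℝ) / n) ^ k * (b * (k : ℝ) / n) ^ (2 * (m - k)) := by
        refine Finset.sum_le_sum_of_subset_of_nonneg ?_ (fun j _ _ => by positivity)
        intro j hj
        obtain ⟨hj1, hjm⟩ := (Finset.mem_filter.1 hj).2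
        exact Finset.mem_Icc.2 ⟨hj1, hjm⟩
end

section
/- Let {x_{jl} : j, l ≥ 1} be a double array of quaternion random variables on a common probability space and p = p(n) with p/n → y ∈ (0,∞), and suppose there exist a real random variable ξ with E ξ⁴ < ∞ and a constant L such that for every n ≥ 1 and every δ > 0, (np)^{−1} Σ_{j≤p, l≤n} P(‖x_{jl}‖ > δ√n) ≤ L·P(|ξ| > δ√n). Then there exists a sequence of positive reals δ_n → 0 with δ_n√n nondecreasing to ∞ such that, with probability one, only finitely many n satisfy ‖x_{jl}‖ > δ_n√n for some j ≤ p, l ≤ n (i.e. P(max_{j≤p, l≤n} ‖x_{jl}‖ > δ_n√n infinitely often) = 0). -/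
open scoped Quaternion Matrix
open MeasureTheory Filter Topology

noncomputable section

instance : MeasurableSpace ℍ[ℝ] := borel ℍ[ℝ]
instance : BorelSpace ℍ[ℝ] := ⟨rfl⟩


/- ### Auxiliary lemmas -/

lemma trunc_sqrt_two_pow (n : ℕ) : Real.sqrt ((2:ℝ)^n) = (Real.sqrt 2)^n := by
  have h : ((Real.sqrt 2)^n)^2 = (2:ℝ)^n := by
    rw [← pow_mul, mul_comm, pow_mul, Real.sq_sqrt (by norm_num : (0:ℝ) ≤ 2)]
  rw [← h, Real.sqrt_sq (by positivity)]

lemma trunc_ico_tel (h : ℕ → ℝ) : ∀ K : ℕ,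
    ∑ m ∈ Finset.range K, ∑ j ∈ Finset.Ico (4^m) (4^(m+1)), h j
      = ∑ j ∈ Finset.Ico 1 (4^K), h j := by
  intro K
  induction K with
  | zero => simp
  | succ K ih =>
      rw [Finset.sum_range_succ, ih,
        Finset.sum_Ico_consecutive h (Nat.one_le_iff_ne_zero.2 (by positivity))
          (Nat.pow_le_pow_right (by norm_num) (Nat.le_succ K))]

lemma trunc_lemA {Ω : Type*} [MeasurableSpace Ω] (μ : Measure Ω) [IsProbabilityMeasure μ]
    (Y : Ω → ℝ) (hint : Integrable Y μ) (hY : 0 ≤ Y) :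
    Summable (fun m : ℕ => (4:ℝ)^m * (μ {ω | (4:ℝ)^m < Y ω}).toReal) := by
  set h : ℕ → ℝ := fun j => (μ {ω | (j:ℝ) < Y ω}).toReal with hh
  have hlt : (∑' j : ℕ, μ {ω | (j:ℝ) < Y ω}) < ⊤ := by
    have := @ProbabilityTheory.tsum_prob_mem_Ioi_lt_top Ω ⟨μ⟩ ‹_› Y hint hY
    simpa [Set.mem_Ioi] using this
  have hsum : Summable h := ENNReal.summable_toReal hlt.ne
  have hnn : ∀ j, 0 ≤ h j := fun j => ENNReal.toReal_nonneg
  set f : ℕ → ℝ := fun m => (4:ℝ)^m * (μ {ω | (4:ℝ)^m < Y ω}).toReal with hf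
  have hfnn : ∀ m, 0 ≤ f m := by
    intro m; apply mul_nonneg (by positivity) ENNReal.toReal_nonneg
  have key : ∀ m : ℕ, f (m+1) ≤ (4/3) * ∑ j ∈ Finset.Ico (4^m) (4^(m+1)), h j := by
    intro m
    have hsub : ∀ j ∈ Finset.Ico (4^m) (4^(m+1)),
        (μ {ω | (4:ℝ)^(m+1) < Y ω}).toReal ≤ h j := by
      intro j hj
      rw [Finset.mem_Ico] at hj
      have hj' : (j:ℝ) ≤ (4:ℝ)^(m+1) := by
        have : (j:ℝ) ≤ ((4^(m+1) : ℕ) : ℝ) := by exact_mod_cast hj.2.le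
        simpa [Nat.cast_pow] using this
      apply ENNReal.toReal_mono (measure_ne_top μ _)
      apply measure_mono
      intro ω hω
      exact lt_of_le_of_lt hj' hω
    have hcard : (Finset.Ico (4^m) (4^(m+1))).card = 3 * 4^m := by
      rw [Nat.card_Ico]; ring_nf; omega
    have hlb : (3:ℝ) * 4^m * (μ {ω | (4:ℝ)^(m+1) < Y ω}).toReal
        ≤ ∑ j ∈ Finset.Ico (4^m) (4^(m+1)), h j := by
      have := Finset.card_nsmul_le_sum _ _ _ hsub
      rw [hcard] at this
      simpa [nsmul_eq_mul, Nat.cast_mul, Nat.cast_pow, mul_comm] using this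
    have : f (m+1) = (4/3) * ((3:ℝ) * 4^m * (μ {ω | (4:ℝ)^(m+1) < Y ω}).toReal) := by
      simp only [hf]; ring
    rw [this]
    exact mul_le_mul_of_nonneg_left hlb (by norm_num)
  apply summable_of_sum_range_le hfnn (c := 1 + (4/3) * ∑' j, h j)
  intro M
  cases M with
  | zero =>
      simp only [Finset.range_zero, Finset.sum_empty]
      have : 0 ≤ ∑' j, h j := tsum_nonneg hnn
      linarith
  | succ M =>
      rw [Finset.sum_range_succ']
      have h0 : f 0 ≤ 1 := by
        simp only [hf, pow_zero, one_mul]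
        exact ENNReal.toReal_le_of_le_ofReal one_pos.le (by simpa using prob_le_one)
      have h1 : ∑ m ∈ Finset.range M, f (m+1)
          ≤ (4/3) * ∑ j ∈ Finset.Ico 1 (4^M), h j := by
        calc ∑ m ∈ Finset.range M, f (m+1)
            ≤ ∑ m ∈ Finset.range M, (4/3) * ∑ j ∈ Finset.Ico (4^m) (4^(m+1)), h j :=
              Finset.sum_le_sum (fun m _ => key m)
          _ = (4/3) * ∑ j ∈ Finset.Ico 1 (4^M), h j := by
              rw [← Finset.mul_sum, trunc_ico_tel]
      have h2 : ∑ j ∈ Finset.Ico 1 (4^M), h j ≤ ∑' j, h j :=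
        Summable.sum_le_tsum _ (fun j _ => hnn j) hsum
      have h3 : (4/3 : ℝ) * ∑ j ∈ Finset.Ico 1 (4^M), h j ≤ (4/3) * ∑' j, h j := by
        nlinarith [h2]
      have := h1.trans h3
      linarith

lemma trunc_lemB {Ω : Type*} [MeasurableSpace Ω] (μ : Measure Ω) [IsProbabilityMeasure μ]
    (ξ : Ω → ℝ) (hξ4 : Integrable (fun ω => |ξ ω| ^ 4) μ) {a : ℝ} (ha : 0 < a) :
    Summable (fun m : ℕ => (4:ℝ)^m *
      (μ {ω | a * (Real.sqrt 2)^m < |ξ ω|}).toReal) := by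
  have hY : Integrable (fun ω => |ξ ω|^4 / a^4) μ := hξ4.div_const _
  have h := trunc_lemA μ _ hY (fun ω => by positivity)
  have hset : ∀ m : ℕ, {ω | a * (Real.sqrt 2)^m < |ξ ω|}
      = {ω | (4:ℝ)^m < |ξ ω|^4 / a^4} := by
    intro m
    ext ω
    simp only [Set.mem_setOf_eq]
    rw [lt_div_iff₀ (by positivity)]
    have hs4 : (Real.sqrt 2)^4 = (4:ℝ) := by
      rw [show (4:ℕ) = 2*2 from rfl, pow_mul, Real.sq_sqrt (by norm_num : (0:ℝ) ≤ 2)]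
      norm_num
    have h1 : (4:ℝ)^m * a^4 = (a * (Real.sqrt 2)^m)^4 := by
      rw [mul_pow, ← pow_mul, mul_comm m 4, pow_mul, hs4]
      ring
    rw [h1]
    exact (pow_lt_pow_iff_left₀ (by positivity) (abs_nonneg _) (by norm_num)).symm
  simp_rw [hset]
  exact h

def truncMseq (g : ℕ → ℕ) : ℕ → ℕ
  | 0 => 0
  | (k+1) => max (max (truncMseq g k + 1) (g (k+1))) (4*(k+4))

lemma truncMseq_strictMono (g : ℕ → ℕ) : StrictMono (truncMseq g) :=
  strictMono_nat_of_lt_succ fun _ =>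
    lt_of_lt_of_le (Nat.lt_succ_self _) (le_trans (le_max_left _ _) (le_max_left _ _))

lemma truncMseq_ge (g : ℕ → ℕ) (k : ℕ) : k ≤ truncMseq g k := (truncMseq_strictMono g).le_apply

lemma truncMseq_ge_g (g : ℕ → ℕ) (k : ℕ) : g (k+1) ≤ truncMseq g (k+1) :=
  le_trans (le_max_right _ _) (le_max_left _ _)

lemma truncMseq_growth (g : ℕ → ℕ) (k : ℕ) (hk : 1 ≤ k) : 4*(k+3) ≤ truncMseq g k := by
  obtain ⟨j, rfl⟩ : ∃ j, k = j + 1 := ⟨k - 1, by omega⟩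
  have : 4*(j+4) ≤ truncMseq g (j+1) := le_max_right _ _
  omega

def truncKap (g : ℕ → ℕ) (m : ℕ) : ℕ := 3 + Nat.findGreatest (fun k => truncMseq g k ≤ m) m

lemma truncKap_ge (g : ℕ → ℕ) (m : ℕ) : 3 ≤ truncKap g m := Nat.le_add_right _ _

lemma truncKap_le (g : ℕ → ℕ) (m : ℕ) : truncKap g m ≤ m + 3 := by
  have := Nat.findGreatest_le (P := fun k => truncMseq g k ≤ m) m
  unfold truncKap; omega

lemma truncKap_mono (g : ℕ → ℕ) : Monotone (truncKap g) := by
  intro m m' hmm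
  unfold truncKap
  set F := Nat.findGreatest (fun k => truncMseq g k ≤ m) m with hF
  rcases Nat.eq_zero_or_pos F with h0 | hpos
  · omega
  · have hPF : truncMseq g F ≤ m :=
      Nat.findGreatest_of_ne_zero (P := fun k => truncMseq g k ≤ m) hF.symm (by omega)
    have hFm : F ≤ m := hF ▸ Nat.findGreatest_le m
    have := Nat.le_findGreatest (P := fun k => truncMseq g k ≤ m') (le_trans hFm hmm)
      (show truncMseq g F ≤ m' from le_trans hPF hmm)
    omega

lemma truncKap_succ_le (g : ℕ → ℕ) (m : ℕ) : truncKap g (m+1) ≤ truncKap g m + 1 := by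
  unfold truncKap
  set F := Nat.findGreatest (fun k => truncMseq g k ≤ m + 1) (m+1) with hF
  rcases Nat.lt_or_ge F 2 with h0 | h2
  · omega
  · have hPF : truncMseq g F ≤ m + 1 :=
      Nat.findGreatest_of_ne_zero (P := fun k => truncMseq g k ≤ m + 1) hF.symm (by omega)
    have hprev : truncMseq g (F - 1) ≤ m := by
      have := truncMseq_strictMono g (show F - 1 < F by omega)
      omega
    have hFm : F ≤ m + 1 := hF ▸ Nat.findGreatest_le (m+1)
    have := Nat.le_findGreatest (P := fun k => truncMseq g k ≤ m)
      (show F - 1 ≤ m by omega) hprev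
    omega

lemma truncKap_big (g : ℕ → ℕ) (K m : ℕ) (h : truncMseq g K ≤ m) : 3 + K ≤ truncKap g m := by
  have hKm : K ≤ m := le_trans (truncMseq_ge g K) h
  have := Nat.le_findGreatest (P := fun k => truncMseq g k ≤ m) hKm h
  unfold truncKap; omega

lemma truncKap_block (g : ℕ → ℕ) (m k : ℕ) (h : truncKap g m = 3 + k) (hk : 1 ≤ k) :
    truncMseq g k ≤ m := by
  have : Nat.findGreatest (fun k => truncMseq g k ≤ m) m = k := by unfold truncKap at h; omega
  exact Nat.findGreatest_of_ne_zero (P := fun k => truncMseq g k ≤ m) this (by omega)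

lemma trunc_sum_tail_le {F : ℕ → ℝ} (hF : Summable F) (hnn : ∀ m, 0 ≤ F m) (M : ℕ)
    (T : Finset ℕ) (hT : ∀ m ∈ T, M ≤ m) : ∑ m ∈ T, F m ≤ ∑' m, F (m + M) := by
  have hinj : Set.InjOn (fun m => m - M) T := by
    intro a ha b hb hab
    have := hT a ha; have := hT b hb
    simp only at hab; omega
  have h1 : ∑ i ∈ T.image (fun m => m - M), F (i + M) = ∑ m ∈ T, F ((m - M) + M) :=
    Finset.sum_image (fun a ha b hb => hinj ha hb)
  have heq : ∑ m ∈ T, F ((m - M) + M) = ∑ m ∈ T, F m := by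
    apply Finset.sum_congr rfl
    intro m hm
    rw [Nat.sub_add_cancel (hT m hm)]
  rw [← heq, ← h1]
  exact Summable.sum_le_tsum _ (fun i _ => hnn _) ((summable_nat_add_iff M).2 hF)


set_option maxHeartbeats 1000000 in
/-- **Truncation step.** Under the tail-domination condition (4) and `p/n → y ∈ (0,∞)`,
there is a sequence `δₙ → 0` of positive reals with `δₙ√n` nondecreasing to `∞` such that,
with probability one, `‖x_{jl}‖ > δₙ√n` for some `j ≤ p`, `l ≤ n` happens for only
finitely many `n`. -/
theorem truncation_almost_surely
    {Ω : Type*} [MeasurableSpace Ω] (μ : Measure Ω) [IsProbabilityMeasure μ]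
    (x : ℕ → ℕ → Ω → ℍ[ℝ]) (ξ : Ω → ℝ) (p : ℕ → ℕ) (L y : ℝ)
    (hmeas : ∀ j l, Measurable (x j l))
    (hξmeas : Measurable ξ)
    (hξ4 : Integrable (fun ω => |ξ ω| ^ 4) μ)
    (htail : ∀ n : ℕ, 1 ≤ n → ∀ δ : ℝ, 0 < δ →
      ((n : ℝ) * p n)⁻¹ * ∑ j ∈ Finset.range (p n), ∑ l ∈ Finset.range n,
          (μ {ω | δ * Real.sqrt n < ‖x j l ω‖}).toReal ≤
        L * (μ {ω | δ * Real.sqrt n < |ξ ω|}).toReal)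
    (hy : 0 < y)
    (hp : Tendsto (fun n => (p n : ℝ) / n) atTop (𝓝 y)) :
    ∃ δ : ℕ → ℝ,
      (∀ n, 0 < δ n) ∧
      Tendsto δ atTop (𝓝 0) ∧
      Monotone (fun n => δ n * Real.sqrt n) ∧
      Tendsto (fun n => δ n * Real.sqrt n) atTop atTop ∧
      ∀ᵐ ω ∂μ, ∀ᶠ n in atTop, ∀ j < p n, ∀ l < n, ‖x j l ω‖ ≤ δ n * Real.sqrt n := by
  classical
  set s : ℝ := Real.sqrt 2 with hs
  have hs_pos : 0 < s := Real.sqrt_pos.2 (by norm_num)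
  have hs_sq : s^2 = 2 := Real.sq_sqrt (by norm_num)
  set G : ℝ → ℝ := fun t => (μ {ω | t < |ξ ω|}).toReal with hG
  have hGnn : ∀ t, 0 ≤ G t := fun t => ENNReal.toReal_nonneg
  set F : ℕ → ℕ → ℝ := fun k m => (4:ℝ)^m * G (s^m / (k:ℝ)) with hF
  have hFnn : ∀ k m, 0 ≤ F k m := fun k m => mul_nonneg (by positivity) (hGnn _)
  have hFsum : ∀ k : ℕ, 1 ≤ k → Summable (F k) := by
    intro k hk
    have h := trunc_lemB μ ξ hξ4 (a := ((k:ℝ))⁻¹) (by positivity)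
    refine h.congr fun m => ?_
    simp only [hF, hG, hs]
    rw [inv_mul_eq_div]
  have hex : ∀ k : ℕ, ∃ M : ℕ, ∑' m, F (3+k) (m + M) ≤ (1/2:ℝ)^k := by
    intro k
    have ht := tendsto_sum_nat_add (F (3+k))
    have hev := ht.eventually_lt_const (show (0:ℝ) < (1/2)^k by positivity)
    obtain ⟨M, hM⟩ := hev.exists
    exact ⟨M, hM.le⟩
  choose g hg using hex
  set κ : ℕ → ℕ := truncKap g with hκ
  have hκ3 : ∀ m, 3 ≤ κ m := truncKap_ge g
  have hκpos : ∀ m, (0:ℝ) < (κ m : ℝ) := fun m => by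
    have := hκ3 m; positivity
  set c : ℕ → ℝ := fun m => s^m / (κ m : ℝ) with hc
  have hcpos : ∀ m, 0 < c m := fun m => div_pos (by positivity) (hκpos m)
  have hs43 : (4/3 : ℝ) ≤ s := by
    rw [hs]
    exact (Real.le_sqrt (by norm_num) (by norm_num)).2 (by norm_num)
  have hcmono : Monotone c := by
    apply monotone_nat_of_le_succ
    intro m
    have h1 : κ (m+1) ≤ κ m + 1 := truncKap_succ_le g m
    have h3 : (3:ℝ) ≤ (κ m : ℝ) := by exact_mod_cast hκ3 m
    have h43 : ((κ (m+1) : ℝ)) ≤ s * (κ m : ℝ) := by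
      have hcast : ((κ (m+1) : ℝ)) ≤ (κ m : ℝ) + 1 := by exact_mod_cast h1
      nlinarith
    simp only [hc]
    rw [div_le_div_iff₀ (hκpos m) (hκpos (m+1))]
    have hss : s^(m+1) = s * s^m := by ring
    rw [hss]
    nlinarith [pow_pos hs_pos m]
  -- growth lower bound for c
  set r : ℝ := Real.sqrt s with hr
  have hr_pos : 0 < r := Real.sqrt_pos.2 hs_pos
  have hr_sq : r^2 = s := Real.sq_sqrt hs_pos.le
  have hs1 : (1:ℝ) < s := by nlinarith
  have hr1 : 1 < r := by nlinarith
  have hr4 : r^4 = 2 := by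
    rw [show (4:ℕ) = 2*2 from rfl, pow_mul, hr_sq, hs_sq]
  have hκr : ∀ m, (κ m : ℝ) ≤ 3 * r^m := by
    intro m
    have hrm1 : (1:ℝ) ≤ r^m := one_le_pow₀ hr1.le
    rcases Nat.lt_or_ge (κ m) 4 with h4 | h4
    · have hle3 : (κ m : ℝ) ≤ 3 := by
        have h1 := hκ3 m
        have : κ m = 3 := by omega
        rw [this]; norm_num
      nlinarith
    · set k := κ m - 3 with hk
      have hκm : κ m = 3 + k := by
        have := hκ3 m; omega
      have hk1 : 1 ≤ k := by omega
      have hMle : truncMseq g k ≤ m := truncKap_block g m k hκm hk1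
      have hm4 : 4*(k+3) ≤ m := le_trans (truncMseq_growth g k hk1) hMle
      have h2k : (κ m : ℝ) ≤ 2^(k+3) := by
        rw [hκm]
        have := Nat.lt_two_pow_self (n := k+3)
        have : (3 + k : ℕ) < 2^(k+3) := by
          have h := Nat.lt_two_pow_self (n := k+3); omega
        exact_mod_cast this.le
      have hpow : (2:ℝ)^(k+3) = r^(4*(k+3)) := by
        rw [pow_mul, hr4]
      have hmono : r^(4*(k+3)) ≤ r^m := pow_le_pow_right₀ hr1.le hm4
      calc (κ m : ℝ) ≤ 2^(k+3) := h2k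
        _ = r^(4*(k+3)) := hpow
        _ ≤ r^m := hmono
        _ ≤ 3 * r^m := by nlinarith
  have hclb : ∀ m, r^m / 3 ≤ c m := by
    intro m
    simp only [hc]
    rw [div_le_div_iff₀ (by norm_num) (hκpos m)]
    have h1 := hκr m
    have h2 : s^m = r^m * r^m := by
      rw [← hr_sq, ← pow_mul, two_mul, pow_add]
    rw [h2]
    nlinarith [pow_pos hr_pos m]
  have hctop : Tendsto c atTop atTop :=
    tendsto_atTop_mono hclb
      ((tendsto_pow_atTop_atTop_of_one_lt hr1).atTop_div_const (by norm_num))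
  -- bounds on p
  obtain ⟨n₁, hn₁⟩ := Metric.tendsto_atTop.1 hp (y/3) (by positivity)
  set n₀ : ℕ := max n₁ 1 with hn₀
  have hpbound : ∀ n : ℕ, n₀ ≤ n → (2*y/3) * n ≤ (p n : ℝ) ∧ (p n : ℝ) ≤ (4*y/3) * n := by
    intro n hn
    have hn1 : 1 ≤ n := le_trans (le_max_right _ _) hn
    have hnpos : (0:ℝ) < n := by exact_mod_cast hn1
    have := hn₁ n (le_trans (le_max_left _ _) hn)
    rw [Real.dist_eq, abs_lt] at this
    constructor
    · have : (2*y/3) < (p n : ℝ) / n := by linarith [this.1]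
      calc (2*y/3) * n ≤ ((p n : ℝ) / n) * n := by nlinarith
        _ = (p n : ℝ) := by field_simp
    · have : (p n : ℝ) / n < 4*y/3 := by linarith [this.2]
      calc (p n : ℝ) = ((p n : ℝ) / n) * n := by field_simp
        _ ≤ (4*y/3) * n := by nlinarith
  set C₀ : ℕ := (Finset.range n₀).sup p with hC₀
  -- threshold m₀
  have hm₀ex : ∃ m₀ : ℕ, ∀ m, m₀ ≤ m → n₀ ≤ 2^(m+2) ∧ ((C₀:ℝ) ≤ (2*y/3) * 2^(m+2))
      ∧ ((1:ℝ) ≤ (2*y/3) * 2^(m+2)) := by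
    have h2top : Tendsto (fun m : ℕ => (2*y/3) * (2:ℝ)^(m+2)) atTop atTop := by
      apply Tendsto.const_mul_atTop (by positivity)
      exact (tendsto_pow_atTop_atTop_of_one_lt (by norm_num : (1:ℝ) < 2)).comp
        (tendsto_add_atTop_nat 2)
    have h1 : ∀ᶠ m : ℕ in atTop, (C₀:ℝ) ≤ (2*y/3) * 2^(m+2) := h2top.eventually_ge_atTop _
    have h2 : ∀ᶠ m : ℕ in atTop, (1:ℝ) ≤ (2*y/3) * 2^(m+2) := h2top.eventually_ge_atTop _
    have h3 : ∀ᶠ m : ℕ in atTop, n₀ ≤ 2^(m+2) := by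
      refine eventually_atTop.2 ⟨n₀, fun m hm => ?_⟩
      calc n₀ ≤ m := hm
        _ ≤ 2^m := (Nat.lt_two_pow_self (n := m)).le
        _ ≤ 2^(m+2) := Nat.pow_le_pow_right (by norm_num) (by omega)
    obtain ⟨m₀, hm₀⟩ := eventually_atTop.1 ((h1.and h2).and h3)
    exact ⟨m₀, fun m hm => ⟨(hm₀ m hm).2, (hm₀ m hm).1.1, (hm₀ m hm).1.2⟩⟩
  obtain ⟨m₀, hm₀⟩ := hm₀ex
  -- the blocks
  set P : ℕ → ℕ := fun m => (Finset.range (2^(m+1)+1)).sup p with hP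
  set B : ℕ → Set Ω := fun m =>
    ⋃ j ∈ Finset.range (P m), ⋃ l ∈ Finset.range (2^(m+1)), {ω | c m < ‖x j l ω‖} with hB
  set C₁ : ℝ := (64*y/3) * |L| with hC₁
  have hC₁nn : 0 ≤ C₁ := by positivity
  set f : ℕ → ℝ := fun m => (μ (B m)).toReal with hf
  have hfnn : ∀ m, 0 ≤ f m := fun m => ENNReal.toReal_nonneg
  have hf1 : ∀ m, f m ≤ 1 := by
    intro m
    simp only [hf]
    exact ENNReal.toReal_le_of_le_ofReal one_pos.le (by simpa using prob_le_one)
  -- key estimate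
  have hfb : ∀ m, m₀ ≤ m → f m ≤ C₁ * F (κ m) m := by
    intro m hm
    obtain ⟨h1, h2, h3⟩ := hm₀ m hm
    set N : ℕ := 2^(m+2) with hN
    have hNcast : ((N:ℕ):ℝ) = (2:ℝ)^(m+2) := by
      simp only [hN]; push_cast; ring
    have hN1 : 1 ≤ N := Nat.one_le_two_pow
    have hpN := hpbound N h1
    have hpNlo : (2*y/3) * ((2:ℝ)^(m+2)) ≤ (p N : ℝ) := by
      rw [← hNcast]; exact hpN.1
    have hpN1 : 1 ≤ p N := by
      have : (1:ℝ) ≤ (p N : ℝ) := le_trans h3 hpNlo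
      exact_mod_cast this
    have hPle : P m ≤ p N := by
      apply Finset.sup_le
      intro n' hn'
      rw [Finset.mem_range] at hn'
      have hn'le : n' ≤ 2^(m+1) := by omega
      have hcast : (p n' : ℝ) ≤ (p N : ℝ) → p n' ≤ p N := fun h => by exact_mod_cast h
      apply hcast
      rcases Nat.lt_or_ge n' n₀ with hlt | hge
      · have hsup : p n' ≤ C₀ := Finset.le_sup (Finset.mem_range.2 hlt)
        calc (p n' : ℝ) ≤ (C₀ : ℝ) := by exact_mod_cast hsup
          _ ≤ (2*y/3) * 2^(m+2) := h2
          _ ≤ (p N : ℝ) := hpNlo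
      · have hhi := (hpbound n' hge).2
        calc (p n' : ℝ) ≤ (4*y/3) * n' := hhi
          _ ≤ (4*y/3) * 2^(m+1) := by
              have : (n' : ℝ) ≤ (2:ℝ)^(m+1) := by exact_mod_cast hn'le
              nlinarith
          _ = (2*y/3) * 2^(m+2) := by ring
          _ ≤ (p N : ℝ) := hpNlo
    -- apply htail
    have hsqrtN : Real.sqrt ((N:ℕ):ℝ) = s^(m+2) := by
      rw [hNcast, trunc_sqrt_two_pow, hs]
    set δ' : ℝ := c m / s^(m+2) with hδ'
    have hδ'pos : 0 < δ' := div_pos (hcpos m) (by positivity)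
    have hval : δ' * Real.sqrt ((N:ℕ):ℝ) = c m := by
      rw [hsqrtN, hδ', div_mul_cancel₀]
      positivity
    have ht := htail N hN1 δ' hδ'pos
    rw [hval] at ht
    have hNppos : (0:ℝ) < (N:ℝ) * (p N) := by
      have h1' : (0:ℝ) < (N:ℝ) := by rw [hNcast]; positivity
      have h2' : (0:ℝ) < (p N : ℝ) := by exact_mod_cast hpN1
      positivity
    have hLG : 0 ≤ L * G (c m) := by
      refine le_trans ?_ ht
      positivity
    have hS : ∑ j ∈ Finset.range (p N), ∑ l ∈ Finset.range N,
        (μ {ω | c m < ‖x j l ω‖}).toReal ≤ ((N:ℝ) * (p N)) * (L * G (c m)) := by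
      have := mul_le_mul_of_nonneg_left ht hNppos.le
      rwa [← mul_assoc, mul_inv_cancel₀ hNppos.ne', one_mul] at this
    -- measure of B m
    have hμB : f m ≤ ∑ j ∈ Finset.range (p N), ∑ l ∈ Finset.range N,
        (μ {ω | c m < ‖x j l ω‖}).toReal := by
      have hsub : (μ (B m)) ≤ ∑ j ∈ Finset.range (P m), ∑ l ∈ Finset.range (2^(m+1)),
          μ {ω | c m < ‖x j l ω‖} := by
        refine le_trans (measure_biUnion_finset_le _ _) ?_
        exact Finset.sum_le_sum fun j _ => measure_biUnion_finset_le _ _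
      have hne : ∀ (A : Finset ℕ) (Bf : Finset ℕ),
          (∑ j ∈ A, ∑ l ∈ Bf, μ {ω | c m < ‖x j l ω‖}) ≠ ⊤ := by
        intro A Bf
        refine (ENNReal.sum_lt_top.2 fun j _ => (ENNReal.sum_lt_top.2 fun l _ => ?_)).ne
        exact measure_lt_top μ _
      have h1' : f m ≤ (∑ j ∈ Finset.range (P m), ∑ l ∈ Finset.range (2^(m+1)),
          μ {ω | c m < ‖x j l ω‖}).toReal := ENNReal.toReal_mono (hne _ _) hsub
      have h2' : (∑ j ∈ Finset.range (P m), ∑ l ∈ Finset.range (2^(m+1)),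
          μ {ω | c m < ‖x j l ω‖}).toReal = ∑ j ∈ Finset.range (P m),
          ∑ l ∈ Finset.range (2^(m+1)), (μ {ω | c m < ‖x j l ω‖}).toReal := by
        rw [ENNReal.toReal_sum fun j _ => (ENNReal.sum_lt_top.2 fun l _ => measure_lt_top μ _).ne]
        exact Finset.sum_congr rfl fun j _ =>
          ENNReal.toReal_sum fun l _ => (measure_lt_top μ _).ne
      rw [h2'] at h1'
      refine le_trans h1' ?_
      have hNle : 2^(m+1) ≤ N := by
        simp only [hN]; exact Nat.pow_le_pow_right (by norm_num) (by omega)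
      refine le_trans (Finset.sum_le_sum fun j _ =>
        Finset.sum_le_sum_of_subset_of_nonneg
          (Finset.range_subset_range.2 hNle) fun l _ _ => ENNReal.toReal_nonneg) ?_
      exact Finset.sum_le_sum_of_subset_of_nonneg
        (Finset.range_subset_range.2 hPle)
        (fun j _ _ => Finset.sum_nonneg fun l _ => ENNReal.toReal_nonneg)
    -- combine
    have hNp4 : ((N:ℝ)) * (p N) ≤ (64*y/3) * 4^m := by
      have hphi : (p N : ℝ) ≤ (4*y/3) * (2:ℝ)^(m+2) := by
        rw [← hNcast]; exact hpN.2
      have h4m : (2:ℝ)^(m+2) * (2:ℝ)^(m+2) = 16 * 4^m := by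
        rw [← pow_add, show m+2+(m+2) = 2*m+4 by ring, pow_add, pow_mul]
        norm_num
        ring
      rw [hNcast]
      nlinarith [pow_pos (by norm_num : (0:ℝ) < 2) (m+2)]
    calc f m ≤ ((N:ℝ) * (p N)) * (L * G (c m)) := le_trans hμB hS
      _ ≤ ((64*y/3) * 4^m) * (L * G (c m)) := by nlinarith
      _ ≤ ((64*y/3) * 4^m) * (|L| * G (c m)) := by
          have : L * G (c m) ≤ |L| * G (c m) :=
            mul_le_mul_of_nonneg_right (le_abs_self L) (hGnn _)
          have h4 : (0:ℝ) ≤ (64*y/3) * 4^m := by positivity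
          nlinarith
      _ = C₁ * F (κ m) m := by
          simp only [hC₁, hF, hc]
          ring
  -- summability of f
  set m₁ : ℕ := max m₀ (truncMseq g 1) with hm₁
  have hsumf : Summable f := by
    apply summable_of_sum_range_le hfnn (c := (m₁:ℝ) + C₁ * 2)
    intro Mtot
    rw [← Finset.sum_filter_add_sum_filter_not (Finset.range Mtot) (fun m => m < m₁)]
    have hA : ∑ m ∈ (Finset.range Mtot).filter (fun m => m < m₁), f m ≤ (m₁:ℝ) := by
      refine le_trans (Finset.sum_le_card_nsmul _ _ 1 fun m _ => hf1 m) ?_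
      have hcard : ((Finset.range Mtot).filter (fun m => m < m₁)).card ≤ m₁ := by
        refine le_trans (Finset.card_le_card ?_) (by rw [Finset.card_range])
        intro m hm
        rw [Finset.mem_filter] at hm
        exact Finset.mem_range.2 hm.2
      simp only [nsmul_eq_mul, mul_one]
      exact_mod_cast hcard
    have hB2 : ∑ m ∈ (Finset.range Mtot).filter (fun m => ¬ m < m₁), f m ≤ C₁ * 2 := by
      set T := (Finset.range Mtot).filter (fun m => ¬ m < m₁) with hT
      have hTmem : ∀ m ∈ T, m₁ ≤ m ∧ m < Mtot := by
        intro m hm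
        rw [hT, Finset.mem_filter, Finset.mem_range] at hm
        omega
      have hmap : ∀ m ∈ T, κ m - 3 ∈ Finset.range (Mtot + 1) := by
        intro m hm
        have := truncKap_le g m
        rw [Finset.mem_range]
        have := (hTmem m hm).2
        simp only [hκ] at *
        omega
      rw [← Finset.sum_fiberwise_of_maps_to hmap f]
      have hper : ∀ k ∈ Finset.range (Mtot + 1),
          ∑ m ∈ T.filter (fun m => κ m - 3 = k), f m ≤ C₁ * (1/2)^k := by
        intro k _
        rcases Nat.eq_zero_or_pos k with rfl | hk1
        · have hempty : T.filter (fun m => κ m - 3 = 0) = ∅ := by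
            rw [Finset.eq_empty_iff_forall_notMem]
            intro m hm
            rw [Finset.mem_filter] at hm
            have hm₁le := (hTmem m hm.1).1
            have : truncMseq g 1 ≤ m := le_trans (le_max_right _ _) hm₁le
            have := truncKap_big g 1 m this
            have := hκ3 m
            simp only [hκ] at *
            omega
          rw [hempty]
          simp only [Finset.sum_empty, pow_zero, mul_one]
          exact hC₁nn
        · set Tk := T.filter (fun m => κ m - 3 = k) with hTk
          have hTkmem : ∀ m ∈ Tk, κ m = 3 + k ∧ m₀ ≤ m := by
            intro m hm
            rw [hTk, Finset.mem_filter] at hm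
            have h3 := hκ3 m
            have hm₁le := (hTmem m hm.1).1
            constructor
            · omega
            · exact le_trans (le_max_left _ _) hm₁le
          have hstep1 : ∑ m ∈ Tk, f m ≤ ∑ m ∈ Tk, C₁ * F (3+k) m := by
            refine Finset.sum_le_sum fun m hm => ?_
            have ⟨hκm, hm₀le⟩ := hTkmem m hm
            have := hfb m hm₀le
            rwa [hκm] at this
          have hgk : ∀ m ∈ Tk, g k ≤ m := by
            intro m hm
            have ⟨hκm, _⟩ := hTkmem m hm
            have hMle : truncMseq g k ≤ m := truncKap_block g m k hκm hk1
            have : g k ≤ truncMseq g k := by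
              obtain ⟨j, rfl⟩ : ∃ j, k = j + 1 := ⟨k - 1, by omega⟩
              exact truncMseq_ge_g g j
            omega
          have hstep2 : ∑ m ∈ Tk, F (3+k) m ≤ ∑' m, F (3+k) (m + g k) :=
            trunc_sum_tail_le (hFsum (3+k) (by omega)) (hFnn _) (g k) Tk hgk
          calc ∑ m ∈ Tk, f m ≤ ∑ m ∈ Tk, C₁ * F (3+k) m := hstep1
            _ = C₁ * ∑ m ∈ Tk, F (3+k) m := by rw [Finset.mul_sum]
            _ ≤ C₁ * ∑' m, F (3+k) (m + g k) := by
                exact mul_le_mul_of_nonneg_left hstep2 hC₁nn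
            _ ≤ C₁ * (1/2)^k := mul_le_mul_of_nonneg_left (hg k) hC₁nn
      calc ∑ k ∈ Finset.range (Mtot + 1), ∑ m ∈ T.filter (fun m => κ m - 3 = k), f m
          ≤ ∑ k ∈ Finset.range (Mtot + 1), C₁ * (1/2)^k := Finset.sum_le_sum hper
        _ = C₁ * ∑ k ∈ Finset.range (Mtot + 1), (1/2:ℝ)^k := by rw [Finset.mul_sum]
        _ ≤ C₁ * 2 := mul_le_mul_of_nonneg_left (sum_geometric_two_le _) hC₁nn
    linarith
  -- Borel–Cantelli
  have htsum : (∑' m, μ (B m)) ≠ ⊤ := by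
    have heq : (fun m => μ (B m)) = fun m => ENNReal.ofReal (f m) :=
      funext fun m => (ENNReal.ofReal_toReal (measure_ne_top μ _)).symm
    rw [heq, ← ENNReal.ofReal_tsum_of_nonneg hfnn hsumf]
    exact ENNReal.ofReal_ne_top
  have hae := ae_eventually_notMem htsum
  -- the sequence δ
  set δf : ℕ → ℝ := fun n => if n = 0 then 1 else c (Nat.log 2 n) / Real.sqrt n with hδdef
  have hδval : ∀ n : ℕ, n ≠ 0 → δf n * Real.sqrt n = c (Nat.log 2 n) := by
    intro n hn
    have hnpos : (0:ℝ) < (n:ℝ) := by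
      have : 1 ≤ n := by omega
      exact_mod_cast this
    simp only [hδdef, if_neg hn]
    rw [div_mul_cancel₀ _ (Real.sqrt_ne_zero'.2 hnpos)]
  have hδpos : ∀ n, 0 < δf n := by
    intro n
    by_cases hn : n = 0
    · simp [hδdef, hn]
    · simp only [hδdef, if_neg hn]
      have hnpos : (0:ℝ) < (n:ℝ) := by
        have : 1 ≤ n := by omega
        exact_mod_cast this
      exact div_pos (hcpos _) (Real.sqrt_pos.2 hnpos)
  have hlogtop : Tendsto (fun n : ℕ => Nat.log 2 n) atTop atTop := by
    rw [tendsto_atTop]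
    intro b
    refine eventually_atTop.2 ⟨2^b, fun n hn => ?_⟩
    have hn0 : n ≠ 0 := by
      have : 1 ≤ 2^b := Nat.one_le_two_pow
      omega
    exact (Nat.le_log_iff_pow_le (by norm_num) hn0).2 hn
  refine ⟨δf, hδpos, ?_, ?_, ?_, ?_⟩
  · -- tends to 0
    have hbound : ∀ᶠ n : ℕ in atTop, δf n ≤ (κ (Nat.log 2 n) : ℝ)⁻¹ := by
      refine eventually_atTop.2 ⟨1, fun n hn => ?_⟩
      have hn0 : n ≠ 0 := by omega
      simp only [hδdef, if_neg hn0]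
      have hsle : s^(Nat.log 2 n) ≤ Real.sqrt n := by
        have h1 : (2:ℕ)^(Nat.log 2 n) ≤ n := Nat.pow_log_le_self 2 hn0
        have h2 : ((2:ℝ))^(Nat.log 2 n) ≤ (n:ℝ) := by exact_mod_cast h1
        calc s^(Nat.log 2 n) = Real.sqrt ((2:ℝ)^(Nat.log 2 n)) := by
              rw [trunc_sqrt_two_pow, hs]
          _ ≤ Real.sqrt n := Real.sqrt_le_sqrt h2
      have hspos : (0:ℝ) < s^(Nat.log 2 n) := by positivity
      calc c (Nat.log 2 n) / Real.sqrt n ≤ c (Nat.log 2 n) / s^(Nat.log 2 n) :=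
            div_le_div_of_nonneg_left (hcpos _).le hspos hsle
        _ = (κ (Nat.log 2 n) : ℝ)⁻¹ := by
            simp only [hc]
            rw [div_div, mul_comm, ← div_div, div_self hspos.ne', one_div]
    have hnn' : ∀ᶠ n : ℕ in atTop, (0:ℝ) ≤ δf n :=
      Eventually.of_forall fun n => (hδpos n).le
    refine squeeze_zero' hnn' hbound ?_
    have hklog : Tendsto (fun n : ℕ => κ (Nat.log 2 n)) atTop atTop := by
      rw [tendsto_atTop]
      intro b
      refine eventually_atTop.2 ⟨2^(truncMseq g b), fun n hn => ?_⟩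
      have hn0 : n ≠ 0 := by
        have : 1 ≤ 2^(truncMseq g b) := Nat.one_le_two_pow
        omega
      have hlog : truncMseq g b ≤ Nat.log 2 n :=
        (Nat.le_log_iff_pow_le (by norm_num) hn0).2 hn
      have := truncKap_big g b _ hlog
      simp only [hκ]
      omega
    exact tendsto_inv_atTop_zero.comp (tendsto_natCast_atTop_atTop.comp hklog)
  · -- monotone
    intro a b hab
    simp only
    by_cases ha : a = 0
    · subst ha
      simp only [Nat.cast_zero, Real.sqrt_zero, mul_zero]
      by_cases hb : b = 0
      · simp [hb]
      · rw [hδval b hb]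
        exact (hcpos _).le
    · have hb : b ≠ 0 := by omega
      rw [hδval a ha, hδval b hb]
      exact hcmono (Nat.log_mono_right hab)
  · -- tends to infinity
    refine Tendsto.congr' ?_ (hctop.comp hlogtop)
    refine (eventually_atTop.2 ⟨1, fun n hn => ?_⟩)
    have hn0 : n ≠ 0 := by omega
    exact (hδval n hn0).symm
  · -- almost sure bound
    filter_upwards [hae] with ω hω
    obtain ⟨N, hN⟩ := eventually_atTop.1 hω
    refine eventually_atTop.2 ⟨max (2^N) 1, fun n hn j hj l hl => ?_⟩
    have hn1 : 1 ≤ n := le_trans (le_max_right _ _) hn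
    have hn2 : 2^N ≤ n := le_trans (le_max_left _ _) hn
    have hn0 : n ≠ 0 := by omega
    set m := Nat.log 2 n with hm
    have hmN : N ≤ m := (Nat.le_log_iff_pow_le (by norm_num) hn0).2 hn2
    have hnotB : ω ∉ B m := hN m hmN
    have hnlt : n < 2^(m+1) := Nat.lt_pow_succ_log_self (by norm_num) n
    have hjP : j < P m := by
      have hpn : p n ≤ P m := by
        apply Finset.le_sup (f := p)
        rw [Finset.mem_range]
        omega
      omega
    have hlN : l < 2^(m+1) := by omega
    have hle : ‖x j l ω‖ ≤ c m := by
      by_contra hgt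
      push_neg at hgt
      apply hnotB
      simp only [hB, Set.mem_iUnion]
      exact ⟨j, Finset.mem_range.2 hjP, l, Finset.mem_range.2 hlN, hgt⟩
    rw [hδval n hn0]
    exact hle

end
end

section
/- If ξ is a real random variable with E|ξ|⁴ < ∞, then there exists a nonincreasing sequence of positive reals δ_{2^k} → 0 such that 2^{k/2}·δ_{2^k} is nondecreasing to ∞ and Σ_{k=1}^∞ δ_{2^k}^{−4} · 2^{2k} · P(|ξ| > δ_{2^k}·2^{k/2}) < ∞. -/
open MeasureTheory Filter Topology

/-! Auxiliary construction: a step function `truncS N` that grows to infinity,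
with steps of size at most one, controlled by a sequence of thresholds `truncK N`. -/

private def truncK (N : ℕ → ℕ) : ℕ → ℕ
  | 0 => 0
  | j + 1 => max (truncK N j + 1) (max (2 * (j + 1)) ((j + 1) + N (j + 1)))

private lemma truncK_strictMono (N : ℕ → ℕ) : StrictMono (truncK N) :=
  strictMono_nat_of_lt_succ fun j => by
    have := le_max_left (truncK N j + 1) (max (2 * (j + 1)) ((j + 1) + N (j + 1)))
    simp only [truncK]; omega

private lemma truncK_ge_two (N : ℕ → ℕ) (j : ℕ) : 2 * j ≤ truncK N j := by
  cases j with
  | zero => simp [truncK]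
  | succ j =>
      have := le_max_left (2 * (j + 1)) ((j + 1) + N (j + 1))
      have := le_max_right (truncK N j + 1) (max (2 * (j + 1)) ((j + 1) + N (j + 1)))
      simp only [truncK]; omega

private lemma truncK_ge_add (N : ℕ → ℕ) (j : ℕ) (hj : 1 ≤ j) :
    j + N j ≤ truncK N j := by
  cases j with
  | zero => omega
  | succ j =>
      have := le_max_right (2 * (j + 1)) ((j + 1) + N (j + 1))
      have := le_max_right (truncK N j + 1) (max (2 * (j + 1)) ((j + 1) + N (j + 1)))
      simp only [truncK]; omega

private def truncS (N : ℕ → ℕ) (k : ℕ) : ℕ :=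
  Nat.findGreatest (fun j => truncK N j ≤ k) k

private lemma truncS_le (N : ℕ → ℕ) (k : ℕ) : truncS N k ≤ k :=
  Nat.findGreatest_le k

private lemma truncK_truncS_le (N : ℕ → ℕ) (k : ℕ) : truncK N (truncS N k) ≤ k :=
  Nat.findGreatest_spec (P := fun j => truncK N j ≤ k) (Nat.zero_le k)
    (by simp [truncK])

private lemma le_truncS (N : ℕ → ℕ) {j k : ℕ} (h : truncK N j ≤ k) : j ≤ truncS N k :=
  Nat.le_findGreatest (le_trans ((truncK_strictMono N).le_apply) h) h

private lemma truncS_mono (N : ℕ → ℕ) : Monotone (truncS N) := fun k k' hk =>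
  le_truncS N (le_trans (truncK_truncS_le N k) hk)

private lemma truncS_step (N : ℕ → ℕ) (k : ℕ) : truncS N (k + 1) ≤ truncS N k + 1 := by
  by_contra h
  push_neg at h
  have h1 : truncK N (truncS N (k + 1)) ≤ k + 1 := truncK_truncS_le N (k + 1)
  have h2 : truncK N (truncS N k + 1) < truncK N (truncS N (k + 1)) :=
    (truncK_strictMono N) (by omega)
  have h3 : truncS N k + 1 ≤ truncS N k := le_truncS N (by omega)
  omega

private lemma truncS_two_mul (N : ℕ → ℕ) (k : ℕ) : 2 * truncS N k ≤ k := by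
  rcases Nat.eq_zero_or_pos (truncS N k) with h | h
  · omega
  · exact le_trans (truncK_ge_two N _) (truncK_truncS_le N k)

private lemma truncS_tendsto (N : ℕ → ℕ) : Tendsto (truncS N) atTop atTop :=
  tendsto_atTop_atTop.2 fun j => ⟨truncK N j, fun _ hk => le_truncS N hk⟩

private lemma sub_truncS_mono (N : ℕ → ℕ) : Monotone (fun k => k - truncS N k) := by
  apply monotone_nat_of_le_succ
  intro k
  have h1 := truncS_step N k
  have h2 := truncS_le N k
  omega

/-- Bounding a finite sum of a nonnegative sequence by a tail tsum. -/
private lemma sum_le_tsum_shift {a : ℕ → ℝ} (ha : ∀ m, 0 ≤ a m) (hs : Summable a)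
    {F : Finset ℕ} {n : ℕ} (hF : ∀ m ∈ F, n ≤ m) :
    ∑ m ∈ F, a m ≤ ∑' i, a (i + n) := by
  have hsum : Summable fun i => a (i + n) := (summable_nat_add_iff n).2 hs
  have h1 : ∑ i ∈ F.image (· - n), a (i + n) = ∑ m ∈ F, a ((m - n) + n) :=
    Finset.sum_image (by intro x hx y hy hxy; simp only at hxy; have := hF x hx; have := hF y hy; omega)
  have h2 : ∑ m ∈ F, a ((m - n) + n) = ∑ m ∈ F, a m :=
    Finset.sum_congr rfl fun m hm => by rw [Nat.sub_add_cancel (hF m hm)]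
  rw [← h2, ← h1]
  exact Summable.sum_le_tsum _ (fun i _ => ha _) hsum

/-- **(4.10).** If `ξ` is a real random variable with `E|ξ|⁴ < ∞`, then there is a
nonincreasing sequence of positive reals `δ_{2^k} → 0` with `2^{k/2} δ_{2^k}`
nondecreasing to `∞` such that
`Σ_k δ_{2^k}^{−4} 2^{2k} P(|ξ| > δ_{2^k} 2^{k/2}) < ∞`. -/
theorem truncation_sequence_exists
    {Ω : Type*} [MeasurableSpace Ω] (μ : Measure Ω) [IsProbabilityMeasure μ]
    (ξ : Ω → ℝ) (hξmeas : Measurable ξ)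
    (hξ4 : Integrable (fun ω => |ξ ω| ^ 4) μ) :
    ∃ δ : ℕ → ℝ,
      (∀ k, 0 < δ k) ∧
      Antitone δ ∧
      Tendsto δ atTop (𝓝 0) ∧
      Monotone (fun k : ℕ => (2 : ℝ) ^ ((k : ℝ) / 2) * δ k) ∧
      Tendsto (fun k : ℕ => (2 : ℝ) ^ ((k : ℝ) / 2) * δ k) atTop atTop ∧
      Summable (fun k => (δ k)⁻¹ ^ 4 * 2 ^ (2 * k) *
        (μ {ω | δ k * (2 : ℝ) ^ ((k : ℝ) / 2) < |ξ ω|}).toReal) := by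
  -- basic facts about √2
  have hs2 : (0:ℝ) < Real.sqrt 2 := Real.sqrt_pos.2 (by norm_num)
  have hs2_1 : (1:ℝ) < Real.sqrt 2 := by
    rw [show (1:ℝ) = Real.sqrt 1 from (Real.sqrt_one).symm]
    exact Real.sqrt_lt_sqrt (by norm_num) (by norm_num)
  have h4 : (Real.sqrt 2) ^ 4 = 4 := by
    have h2 : (Real.sqrt 2) ^ 2 = 2 := Real.sq_sqrt (by norm_num)
    calc (Real.sqrt 2) ^ 4 = ((Real.sqrt 2) ^ 2) ^ 2 := by ring
    _ = 4 := by rw [h2]; norm_num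
  have hpow : ∀ k : ℕ, (2:ℝ) ^ ((k : ℝ) / 2) = Real.sqrt 2 ^ k := by
    intro k
    rw [show ((k : ℝ) / 2) = (1 / 2) * (k : ℝ) by ring,
      Real.rpow_mul (by norm_num : (0:ℝ) ≤ 2), Real.rpow_natCast,
      ← Real.sqrt_eq_rpow]
  -- the tail sets and the sequence `a`
  set S : ℕ → Set Ω := fun m => {ω | Real.sqrt 2 ^ m < |ξ ω|} with hS
  have hSmeas : ∀ m, MeasurableSet (S m) := fun m =>
    measurableSet_lt measurable_const hξmeas.abs
  set a : ℕ → ℝ := fun m => 4 ^ m * (μ (S m)).toReal with ha_def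
  have ha0 : ∀ m, 0 ≤ a m := fun m => by positivity
  -- summability of `a` via a layer-cake estimate
  have hint : ∀ m : ℕ, Integrable ((S m).indicator fun _ => (4:ℝ) ^ m) μ :=
    fun m => (integrable_indicator_iff (hSmeas m)).2 (integrableOn_const (LT.lt.ne
      (measure_lt_top μ _)))
  have haint : ∀ m : ℕ, a m = ∫ ω, (S m).indicator (fun _ => (4:ℝ) ^ m) ω ∂μ := by
    intro m
    rw [integral_indicator_const _ (hSmeas m), smul_eq_mul, mul_comm]
    rfl
  have hptwise : ∀ (n : ℕ) (ω : Ω),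
      ∑ m ∈ Finset.range n, (S m).indicator (fun _ => (4:ℝ) ^ m) ω ≤ 2 * |ξ ω| ^ 4 := by
    intro n ω
    have hXnn : (0:ℝ) ≤ |ξ ω| ^ 4 := by positivity
    have hrw : ∀ m : ℕ, (S m).indicator (fun _ => (4:ℝ) ^ m) ω
        = if Real.sqrt 2 ^ m < |ξ ω| then (4:ℝ) ^ m else 0 := fun m => rfl
    simp only [hrw]
    rw [Finset.sum_ite, Finset.sum_const_zero, add_zero]
    set F := Finset.filter (fun m => Real.sqrt 2 ^ m < |ξ ω|) (Finset.range n) with hF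
    rcases F.eq_empty_or_nonempty with hFe | hFne
    · rw [hFe]; simp only [Finset.sum_empty]; positivity
    · set M := F.max' hFne with hM
      have hMmem : M ∈ F := F.max'_mem hFne
      have hMlt : Real.sqrt 2 ^ M < |ξ ω| := (Finset.mem_filter.1 hMmem).2
      have hsub : F ⊆ Finset.range (M + 1) := fun m hm =>
        Finset.mem_range.2 (Nat.lt_succ_of_le (F.le_max' m hm))
      have h1 : ∑ m ∈ F, (4:ℝ) ^ m ≤ ∑ m ∈ Finset.range (M + 1), (4:ℝ) ^ m :=
        Finset.sum_le_sum_of_subset_of_nonneg hsub (fun m _ _ => by positivity)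
      have h2 : ∑ m ∈ Finset.range (M + 1), (4:ℝ) ^ m = ((4:ℝ) ^ (M + 1) - 1) / (4 - 1) :=
        geom_sum_eq (by norm_num) _
      have h3 : (4:ℝ) ^ M ≤ |ξ ω| ^ 4 := by
        calc (4:ℝ) ^ M = (Real.sqrt 2 ^ M) ^ 4 := by rw [← pow_mul, mul_comm, pow_mul, h4]
        _ ≤ |ξ ω| ^ 4 := pow_le_pow_left₀ (by positivity) hMlt.le 4
      have h4M : (0:ℝ) < 4 ^ M := by positivity
      calc ∑ m ∈ F, (4:ℝ) ^ m ≤ ((4:ℝ) ^ (M + 1) - 1) / (4 - 1) := h1.trans_eq h2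
      _ ≤ 2 * (4:ℝ) ^ M := by
          rw [pow_succ]
          nlinarith
      _ ≤ 2 * |ξ ω| ^ 4 := by nlinarith
  have hA : Summable a := by
    apply summable_of_sum_range_le ha0 (c := 2 * ∫ ω, |ξ ω| ^ 4 ∂μ)
    intro n
    have : ∑ m ∈ Finset.range n, a m
        = ∫ ω, ∑ m ∈ Finset.range n, (S m).indicator (fun _ => (4:ℝ) ^ m) ω ∂μ := by
      rw [integral_finset_sum _ (fun m _ => hint m)]
      exact Finset.sum_congr rfl fun m _ => haint m
    rw [this, show (2 : ℝ) * ∫ ω, |ξ ω| ^ 4 ∂μ = ∫ ω, 2 * |ξ ω| ^ 4 ∂μ by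
      rw [integral_const_mul]]
    exact integral_mono (integrable_finset_sum _ fun m _ => hint m)
      (hξ4.const_mul 2) (fun ω => hptwise n ω)
  set A := ∑' m, a m with hAdef
  have hA0 : 0 ≤ A := tsum_nonneg ha0
  -- tails tend to zero; choose thresholds N
  have hT : Tendsto (fun n => ∑' i, a (i + n)) atTop (𝓝 0) := tendsto_sum_nat_add a
  have hNex : ∀ j : ℕ, ∃ N : ℕ, ∀ n ≥ N, ∑' i, a (i + n) ≤ (A + 1) * (64⁻¹ : ℝ) ^ j := by
    intro j
    have hpos : (0:ℝ) < (A + 1) * (64⁻¹ : ℝ) ^ j := by positivity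
    have := hT.eventually (gt_mem_nhds hpos)
    rcases eventually_atTop.1 this with ⟨N, hN⟩
    exact ⟨N, fun n hn => (hN n hn).le⟩
  choose N hN using hNex
  -- the construction
  set s : ℕ → ℕ := truncS N with hsdef
  set δ : ℕ → ℝ := fun k => ((Real.sqrt 2)⁻¹) ^ s k with hδdef
  have hδpos : ∀ k, 0 < δ k := fun k => pow_pos (inv_pos.2 hs2) _
  have hsk_le : ∀ k, s k ≤ k := fun k => truncS_le N k
  -- the key rewriting of the threshold
  have hthr : ∀ k : ℕ, δ k * (2:ℝ) ^ ((k : ℝ) / 2) = Real.sqrt 2 ^ (k - s k) := by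
    intro k
    rw [hpow k]
    have : Real.sqrt 2 ^ k = Real.sqrt 2 ^ (k - s k) * Real.sqrt 2 ^ (s k) := by
      rw [← pow_add, Nat.sub_add_cancel (hsk_le k)]
    rw [hδdef]
    simp only
    rw [this, inv_pow]
    field_simp
  have hthr' : ∀ k : ℕ, (2:ℝ) ^ ((k : ℝ) / 2) * δ k = Real.sqrt 2 ^ (k - s k) := fun k => by
    rw [mul_comm]; exact hthr k
  refine ⟨δ, hδpos, ?_, ?_, ?_, ?_, ?_⟩
  · -- Antitone
    intro k k' hk
    exact pow_le_pow_of_le_one (by positivity) (inv_le_one_of_one_le₀ hs2_1.le)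
      (truncS_mono N hk)
  · -- tendsto 0
    have h1 : Tendsto (fun n : ℕ => ((Real.sqrt 2)⁻¹) ^ n) atTop (𝓝 0) :=
      tendsto_pow_atTop_nhds_zero_of_lt_one (by positivity)
        (inv_lt_one_of_one_lt₀ hs2_1)
    exact h1.comp (truncS_tendsto N)
  · -- Monotone 2^{k/2} δ k
    have heq : (fun k : ℕ => (2:ℝ) ^ ((k : ℝ) / 2) * δ k)
        = fun k : ℕ => Real.sqrt 2 ^ (k - s k) := funext hthr'
    rw [heq]
    intro k k' hk
    have hsub : k - s k ≤ k' - s k' := sub_truncS_mono N hk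
    exact pow_le_pow_right₀ hs2_1.le hsub
  · -- tendsto atTop
    have heq : (fun k : ℕ => (2:ℝ) ^ ((k : ℝ) / 2) * δ k)
        = fun k : ℕ => Real.sqrt 2 ^ (k - s k) := funext hthr'
    rw [heq]
    have h1 : Tendsto (fun k : ℕ => k - s k) atTop atTop := by
      apply tendsto_atTop_atTop.2
      intro b
      refine ⟨2 * b, fun k hk => ?_⟩
      have h2 : 2 * s k ≤ k := truncS_two_mul N k
      omega
    exact (tendsto_pow_atTop_atTop_of_one_lt hs2_1).comp h1
  · -- Summability
    set f : ℕ → ℝ := fun k => (δ k)⁻¹ ^ 4 * 2 ^ (2 * k) *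
        (μ {ω | δ k * (2 : ℝ) ^ ((k : ℝ) / 2) < |ξ ω|}).toReal with hfdef
    have hterm : ∀ k : ℕ, f k = 16 ^ (s k) * a (k - s k) := by
      intro k
      have hset : {ω | δ k * (2 : ℝ) ^ ((k : ℝ) / 2) < |ξ ω|} = S (k - s k) := by
        ext ω; simp only [hS, Set.mem_setOf_eq, hthr k]
      have hδinv : (δ k)⁻¹ ^ 4 = (4:ℝ) ^ (s k) := by
        rw [hδdef]
        simp only [inv_pow, inv_inv]
        rw [← pow_mul, mul_comm, pow_mul, h4]
      have h2k : (2:ℝ) ^ (2 * k) = (4:ℝ) ^ k := by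
        rw [pow_mul]; norm_num
      have hksplit : (4:ℝ) ^ k = 4 ^ (k - s k) * 4 ^ (s k) := by
        rw [← pow_add, Nat.sub_add_cancel (hsk_le k)]
      have h16 : (16:ℝ) ^ (s k) = 4 ^ (s k) * 4 ^ (s k) := by
        rw [← mul_pow]; norm_num
      rw [hfdef]
      simp only
      rw [hset, hδinv, h2k, ha_def]
      simp only
      rw [hksplit, h16]
      ring
    have hf0 : ∀ k : ℕ, 0 ≤ f k := fun k => by
      rw [hterm k]; positivity
    apply summable_of_sum_range_le hf0
      (c := ∑' j : ℕ, (A + 1) * ((4:ℝ)⁻¹) ^ j)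
    intro n
    have hgsum : Summable (fun j : ℕ => (A + 1) * ((4:ℝ)⁻¹) ^ j) :=
      (summable_geometric_of_lt_one (by norm_num) (by norm_num)).mul_left _
    have hfiber : ∑ k ∈ Finset.range n, f k
        = ∑ j ∈ Finset.range n, ∑ k ∈ (Finset.range n).filter (fun k => s k = j), f k :=
      (Finset.sum_fiberwise_of_maps_to (fun k hk => Finset.mem_range.2
        (lt_of_le_of_lt (hsk_le k) (Finset.mem_range.1 hk))) f).symm
    rw [hfiber]
    have hblock : ∀ j ∈ Finset.range n,
        ∑ k ∈ (Finset.range n).filter (fun k => s k = j), f k ≤ (A + 1) * ((4:ℝ)⁻¹) ^ j := by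
      intro j _
      set G := (Finset.range n).filter (fun k => s k = j) with hG
      have hGel : ∀ k ∈ G, s k = j := fun k hk => (Finset.mem_filter.1 hk).2
      have h1 : ∑ k ∈ G, f k = 16 ^ j * ∑ k ∈ G, a (k - j) := by
        rw [Finset.mul_sum]
        exact Finset.sum_congr rfl fun k hk => by rw [hterm k, hGel k hk]
      rw [h1]
      rcases Nat.eq_zero_or_pos j with hj0 | hjpos
      · subst hj0
        have : ∑ k ∈ G, a (k - 0) ≤ A := by
          simp only [Nat.sub_zero]
          exact Summable.sum_le_tsum _ (fun m _ => ha0 m) hA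
        calc (16:ℝ) ^ 0 * ∑ k ∈ G, a (k - 0) ≤ 1 * A := by
              rw [pow_zero]; exact mul_le_mul_of_nonneg_left this (by norm_num)
        _ ≤ (A + 1) * ((4:ℝ)⁻¹) ^ 0 := by simp only [pow_zero, mul_one, one_mul]; linarith
      · -- j ≥ 1 : every k in G has k - j ≥ N j
        have hge : ∀ k ∈ G, j + N j ≤ k := by
          intro k hk
          have h2 : truncK N (s k) ≤ k := truncK_truncS_le N k
          rw [hGel k hk] at h2
          exact le_trans (truncK_ge_add N j hjpos) h2
        have hinj : ∀ x ∈ G, ∀ y ∈ G, x - j = y - j → x = y := by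
          intro x hx y hy hxy
          have := hge x hx; have := hge y hy; omega
        have himg : ∑ k ∈ G, a (k - j) = ∑ m ∈ G.image (· - j), a m :=
          (Finset.sum_image hinj).symm
        have htail : ∑ m ∈ G.image (· - j), a m ≤ ∑' i, a (i + N j) := by
          apply sum_le_tsum_shift ha0 hA
          intro m hm
          rcases Finset.mem_image.1 hm with ⟨k, hk, rfl⟩
          have := hge k hk
          omega
        have hNj := hN j (N j) le_rfl
        calc (16:ℝ) ^ j * ∑ k ∈ G, a (k - j)
            ≤ (16:ℝ) ^ j * ((A + 1) * (64⁻¹ : ℝ) ^ j) := by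
              apply mul_le_mul_of_nonneg_left _ (by positivity)
              rw [himg]
              exact htail.trans hNj
        _ = (A + 1) * ((4:ℝ)⁻¹) ^ j := by
              rw [← mul_assoc, mul_comm ((16:ℝ) ^ j), mul_assoc, ← mul_pow]
              norm_num
    calc ∑ j ∈ Finset.range n, ∑ k ∈ (Finset.range n).filter (fun k => s k = j), f k
        ≤ ∑ j ∈ Finset.range n, (A + 1) * ((4:ℝ)⁻¹) ^ j := Finset.sum_le_sum hblock
    _ ≤ ∑' j : ℕ, (A + 1) * ((4:ℝ)⁻¹) ^ j :=
        Summable.sum_le_tsum _ (fun j _ => by positivity) hgsum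
end
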